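/- arXiv:1909.12864 — 3 statements merged into one kernel-verified Lean document; each statement's English description precedes it below -/
import Mathlib

section
/- Let n ≥ 2, let η0 > 0, and for each i = 1,…,n let γ_i : ℝ → ℂ be given (representing the value g_i(jη)^{-1} of the inverse of the i-th generator transfer function on the imaginary axis). Assume there are constants M1, M2 > 0 such that for all η ∈ [−η0, η0]: ∑_{i=1}^n γ_i(η) ≠ 0, |n · (∑_{i=1}^n γ_i(η))^{-1}| ≤ M1, and max_{1≤i≤n} |γ_i(η)| ≤ M2. Then for every ε > 0 there exists Λ > 0 such that for every real symmetric positive-semidefinite n×n matrix L with L·𝟙 = 0 whose second-smallest eigenvalue λ2(L) satisfies λ2(L) ≥ Λ, and for every η ∈ [−η0, η0] with η ≠ 0, the complex matrix diag(γ_1(η),…,γ_n(η)) + L/(jη) is invertible and ‖(diag(γ_1(η),…,γ_n(η)) + L/(jη))^{-1} − (∑_{i=1}^n γ_i(η))^{-1} 𝟙𝟙ᵀ‖ ≤ ε, where ‖·‖ is the spectral (ℓ2-induced operator) norm, j = √−1, and 𝟙 ∈ ℝ^n is the all-ones vector. -/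
open Matrix
open scoped Matrix.Norms.L2Operator RealInnerProductSpace

/-- The second-smallest eigenvalue (algebraic connectivity) of a real symmetric
positive-semidefinite matrix `L` with `L 𝟙 = 0`: by Courant–Fischer it equals the
infimum of the Rayleigh quotient `⟪v, L v⟫` over unit vectors `v` orthogonal to the
all-ones vector `𝟙`. -/
noncomputable def lambda2 {n : ℕ} (L : Matrix (Fin n) (Fin n) ℝ) : ℝ :=
  ⨅ v : {v : EuclideanSpace ℝ (Fin n) //
      ⟪v, (WithLp.equiv 2 (Fin n → ℝ)).symm 1⟫ = 0 ∧ ‖v‖ = 1},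
    ⟪(v : EuclideanSpace ℝ (Fin n)),
      Matrix.toEuclideanCLM (𝕜 := ℝ) L (v : EuclideanSpace ℝ (Fin n))⟫

namespace Stmt0Aux

open Matrix
open scoped RealInnerProductSpace

variable {n : ℕ}

noncomputable def enorm (x : Fin n → ℂ) : ℝ := ‖(WithLp.equiv 2 (Fin n → ℂ)).symm x‖

lemma enorm_nonneg (x : Fin n → ℂ) : 0 ≤ enorm x := norm_nonneg _

lemma enorm_eq (x : Fin n → ℂ) : enorm x = Real.sqrt (∑ i, ‖x i‖ ^ 2) := by
  rw [enorm, EuclideanSpace.norm_eq]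
  simp

lemma enorm_sq (x : Fin n → ℂ) : enorm x ^ 2 = ∑ i, ‖x i‖ ^ 2 := by
  rw [enorm_eq, Real.sq_sqrt]
  positivity

lemma enorm_star (x : Fin n → ℂ) : enorm (star x) = enorm x := by
  simp [enorm_eq]

lemma enorm_one : enorm (1 : Fin n → ℂ) = Real.sqrt n := by
  simp [enorm_eq]

lemma enorm_zero : enorm (0 : Fin n → ℂ) = 0 := by
  simp [enorm_eq]

lemma enorm_zero_iff (x : Fin n → ℂ) : enorm x ≤ 0 ↔ x = 0 := by
  constructor
  · intro h
    have h2 : (WithLp.equiv 2 (Fin n → ℂ)).symm x = 0 := norm_le_zero_iff.mp h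
    have := congrArg (WithLp.equiv 2 (Fin n → ℂ)) h2
    simpa using this
  · rintro rfl
    simp [enorm_eq]

lemma enorm_add_le (x y : Fin n → ℂ) : enorm (x + y) ≤ enorm x + enorm y := by
  rw [enorm, enorm, enorm]
  exact norm_add_le ((WithLp.equiv 2 (Fin n → ℂ)).symm x) ((WithLp.equiv 2 (Fin n → ℂ)).symm y)

lemma enorm_smul (z : ℂ) (x : Fin n → ℂ) : enorm (z • x) = ‖z‖ * enorm x := by
  rw [enorm, enorm]
  exact norm_smul z ((WithLp.equiv 2 (Fin n → ℂ)).symm x)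

lemma dot_le (a b : Fin n → ℂ) : ‖a ⬝ᵥ b‖ ≤ enorm a * enorm b := by
  have h : a ⬝ᵥ b =
      (inner ℂ ((WithLp.equiv 2 (Fin n → ℂ)).symm (star a))
        ((WithLp.equiv 2 (Fin n → ℂ)).symm b) : ℂ) := by
    simp [PiLp.inner_apply, dotProduct, RCLike.inner_apply, mul_comm]
  rw [h, ← enorm_star a]
  exact norm_inner_le_norm _ _

lemma enorm_mono {c : ℝ} (hc : 0 ≤ c) {x y : Fin n → ℂ} (h : ∀ i, ‖x i‖ ≤ c * ‖y i‖) :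
    enorm x ≤ c * enorm y := by
  rw [enorm_eq, enorm_eq]
  have h1 : ∑ i, ‖x i‖ ^ 2 ≤ c ^ 2 * ∑ i, ‖y i‖ ^ 2 := by
    rw [Finset.mul_sum]
    refine Finset.sum_le_sum fun i _ => ?_
    calc ‖x i‖ ^ 2 ≤ (c * ‖y i‖) ^ 2 := pow_le_pow_left₀ (norm_nonneg _) (h i) 2
      _ = c ^ 2 * ‖y i‖ ^ 2 := by ring
  calc Real.sqrt (∑ i, ‖x i‖ ^ 2) ≤ Real.sqrt (c ^ 2 * ∑ i, ‖y i‖ ^ 2) := Real.sqrt_le_sqrt h1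
    _ = c * Real.sqrt (∑ i, ‖y i‖ ^ 2) := by
        rw [Real.sqrt_mul (by positivity), Real.sqrt_sq hc]

lemma inner_clm (L : Matrix (Fin n) (Fin n) ℝ) (v : EuclideanSpace ℝ (Fin n)) :
    ⟪v, Matrix.toEuclideanCLM (𝕜 := ℝ) L v⟫ =
      (WithLp.equiv 2 (Fin n → ℝ) v) ⬝ᵥ (L *ᵥ WithLp.equiv 2 (Fin n → ℝ) v) := by
  have h := Matrix.ofLp_toEuclideanCLM (𝕜 := ℝ) (n := Fin n) L v
  simp only [PiLp.inner_apply, RCLike.inner_apply, conj_trivial, dotProduct]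
  refine Finset.sum_congr rfl fun i _ => ?_
  have h2 := congrFun h i
  have h3 : (Matrix.toEuclideanCLM (𝕜 := ℝ) L v) i = (L *ᵥ WithLp.equiv 2 (Fin n → ℝ) v) i := by
    simpa [Matrix.toLin'_apply] using h2
  rw [h3, mul_comm]; rfl

lemma rayleigh_real {m : ℕ} (L : Matrix (Fin (m + 2)) (Fin (m + 2)) ℝ) (hpsd : L.PosSemidef)
    (x : Fin (m + 2) → ℝ) (hx : ∑ i, x i = 0) :
    lambda2 L * (∑ i, x i ^ 2) ≤ x ⬝ᵥ (L *ᵥ x) := by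
  have hbdd : BddBelow (Set.range fun v : {v : EuclideanSpace ℝ (Fin (m+2)) //
      ⟪v, (WithLp.equiv 2 (Fin (m+2) → ℝ)).symm 1⟫ = 0 ∧ ‖v‖ = 1} =>
      ⟪(v : EuclideanSpace ℝ (Fin (m+2))),
        Matrix.toEuclideanCLM (𝕜 := ℝ) L (v : EuclideanSpace ℝ (Fin (m+2)))⟫) := by
    refine ⟨0, ?_⟩
    rintro y ⟨⟨v, hv⟩, rfl⟩
    dsimp only
    rw [inner_clm]
    have := hpsd.dotProduct_mulVec_nonneg (WithLp.equiv 2 (Fin (m+2) → ℝ) v)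
    simpa using this
  rcases eq_or_ne x 0 with rfl | hx0
  · simp
  · set y : EuclideanSpace ℝ (Fin (m+2)) := (WithLp.equiv 2 (Fin (m+2) → ℝ)).symm x with hy
    have hyx : WithLp.equiv 2 (Fin (m+2) → ℝ) y = x := rfl
    have hyne : y ≠ 0 := by
      intro h
      apply hx0
      have := congrArg (WithLp.equiv 2 (Fin (m+2) → ℝ)) h
      simpa [hyx] using this
    have hN : (0:ℝ) < ‖y‖ := norm_pos_iff.mpr hyne
    have hNsq : ‖y‖ ^ 2 = ∑ i, x i ^ 2 := by
      rw [EuclideanSpace.norm_eq]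
      rw [Real.sq_sqrt (by positivity)]
      refine Finset.sum_congr rfl fun i _ => ?_
      rw [Real.norm_eq_abs, sq_abs]
      rfl
    set v : EuclideanSpace ℝ (Fin (m+2)) := ‖y‖⁻¹ • y with hv
    have hmem : ⟪v, (WithLp.equiv 2 (Fin (m+2) → ℝ)).symm 1⟫ = 0 ∧ ‖v‖ = 1 := by
      constructor
      · rw [hv, real_inner_smul_left]
        have : ⟪y, (WithLp.equiv 2 (Fin (m+2) → ℝ)).symm 1⟫ = ∑ i, x i := by
          simp only [PiLp.inner_apply, RCLike.inner_apply, conj_trivial]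
          refine Finset.sum_congr rfl fun i _ => ?_
          have h1 : ((WithLp.equiv 2 (Fin (m + 2) → ℝ)).symm 1 : EuclideanSpace ℝ (Fin (m+2))) i = 1 := rfl
          rw [h1, one_mul]; rfl
        rw [this, hx, mul_zero]
      · rw [hv, norm_smul, norm_inv, norm_norm, inv_mul_cancel₀ hN.ne']
    have hle := ciInf_le hbdd (⟨v, hmem⟩ : {v : EuclideanSpace ℝ (Fin (m+2)) //
      ⟪v, (WithLp.equiv 2 (Fin (m+2) → ℝ)).symm 1⟫ = 0 ∧ ‖v‖ = 1})
    rw [lambda2] at *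
    have hval : ⟪v, Matrix.toEuclideanCLM (𝕜 := ℝ) L v⟫
        = ‖y‖⁻¹ ^ 2 * (x ⬝ᵥ (L *ᵥ x)) := by
      rw [inner_clm]
      have hvx : WithLp.equiv 2 (Fin (m+2) → ℝ) v = ‖y‖⁻¹ • x := by
        rw [hv]; rfl
      rw [hvx]
      rw [Matrix.mulVec_smul, dotProduct_smul, smul_dotProduct]
      simp [smul_smul]
      ring
    rw [hval] at hle
    have := mul_le_mul_of_nonneg_right hle (le_of_lt (by positivity : (0:ℝ) < ‖y‖ ^ 2))
    calc lambda2 L * (∑ i, x i ^ 2) = lambda2 L * ‖y‖ ^ 2 := by rw [hNsq]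
      _ ≤ (‖y‖⁻¹ ^ 2 * (x ⬝ᵥ (L *ᵥ x))) * ‖y‖ ^ 2 := this
      _ = x ⬝ᵥ (L *ᵥ x) := by field_simp

lemma re_dot {k : ℕ} (L : Matrix (Fin k) (Fin k) ℝ) (w : Fin k → ℂ) :
    (star w ⬝ᵥ ((L.map Complex.ofReal) *ᵥ w)).re
      = (fun i => (w i).re) ⬝ᵥ (L *ᵥ fun i => (w i).re)
        + (fun i => (w i).im) ⬝ᵥ (L *ᵥ fun i => (w i).im) := by
  simp only [dotProduct, mulVec, Matrix.map_apply, Pi.star_apply, Complex.re_sum,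
    Finset.mul_sum, Finset.sum_add_distrib]
  rw [← Finset.sum_add_distrib]
  refine Finset.sum_congr rfl fun i _ => ?_
  rw [← Finset.sum_add_distrib]
  refine Finset.sum_congr rfl (fun j _ => ?_)
  simp only [Pi.star_apply, RCLike.star_def, Complex.mul_re, Complex.mul_im, Complex.conj_re, Complex.conj_im,
    Complex.ofReal_re, Complex.ofReal_im]
  ring

lemma rayleigh_cx {m : ℕ} (L : Matrix (Fin (m+2)) (Fin (m+2)) ℝ) (hpsd : L.PosSemidef)
    (w : Fin (m+2) → ℂ) (hw : ∑ i, w i = 0) :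
    lambda2 L * enorm w ^ 2 ≤ (star w ⬝ᵥ ((L.map Complex.ofReal) *ᵥ w)).re := by
  have hre : ∑ i, (w i).re = 0 := by
    have := congrArg Complex.re hw
    simpa [Complex.re_sum] using this
  have him : ∑ i, (w i).im = 0 := by
    have := congrArg Complex.im hw
    simpa [Complex.im_sum] using this
  have h1 := rayleigh_real L hpsd (fun i => (w i).re) hre
  have h2 := rayleigh_real L hpsd (fun i => (w i).im) him
  have h4 : enorm w ^ 2 = (∑ i, (w i).re ^ 2) + ∑ i, (w i).im ^ 2 := by
    rw [enorm_sq, ← Finset.sum_add_distrib]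
    refine Finset.sum_congr rfl fun i _ => ?_
    rw [Complex.sq_norm, Complex.normSq_apply]; ring
  rw [re_dot, h4, mul_add]
  exact add_le_add h1 h2

lemma quad_bound {L η0 M2 C U W : ℝ} (hL : 0 < L) (hW : 0 < W) (hU : 0 ≤ U)
    (hM2ub : 2 * η0 * M2 * C ≤ L)
    (hQ : L * W ^ 2 ≤ η0 * C * U * W + η0 * M2 * C * W ^ 2) :
    W ≤ 2 * η0 * C / L * U := by
  have ha : η0 * M2 * C * W ^ 2 ≤ L / 2 * W ^ 2 := by
    nlinarith [sq_nonneg W]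
  have hb' : (L / 2 * W) * W ≤ (η0 * C * U) * W := by nlinarith
  have hc : L / 2 * W ≤ η0 * C * U := le_of_mul_le_mul_right hb' hW
  rw [div_mul_eq_mul_div, le_div_iff₀ hL]
  nlinarith

end Stmt0Aux

open Stmt0Aux

set_option maxHeartbeats 2000000

/-- **Theorem 1.** For `n = m+2 ≥ 2` generators with `γᵢ(η) = gᵢ(jη)⁻¹`,
suppose on `[-η0, η0]` the sum `∑ γᵢ(η)` never vanishes, `|n (∑ γᵢ(η))⁻¹| ≤ M1` and
`max_i |γᵢ(η)| ≤ M2`. Then for every `ε > 0` there is `Λ > 0` such that for every real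
symmetric PSD Laplacian `L` with `L 𝟙 = 0` and algebraic connectivity `λ₂(L) ≥ Λ`, and
every nonzero `η ∈ [-η0, η0]`, the matrix `diag(γ(η)) + L/(jη)` is invertible and its
inverse is within `ε` (in spectral norm) of `(∑ γᵢ(η))⁻¹ 𝟙𝟙ᵀ`. -/
theorem stmt_0 {m : ℕ} (η0 : ℝ) (hη0 : 0 < η0)
    (γ : Fin (m + 2) → ℝ → ℂ) (M1 M2 : ℝ) (hM1 : 0 < M1) (hM2 : 0 < M2)
    (hsum : ∀ η ∈ Set.Icc (-η0) η0, ∑ i, γ i η ≠ 0)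
    (hbar : ∀ η ∈ Set.Icc (-η0) η0, ‖((m + 2 : ℕ) : ℂ) * (∑ i, γ i η)⁻¹‖ ≤ M1)
    (hgi : ∀ η ∈ Set.Icc (-η0) η0, ∀ i, ‖γ i η‖ ≤ M2) :
    ∀ ε > 0, ∃ Λ > 0, ∀ L : Matrix (Fin (m + 2)) (Fin (m + 2)) ℝ,
      L.IsSymm → L.PosSemidef → L *ᵥ 1 = 0 → Λ ≤ lambda2 L →
      ∀ η ∈ Set.Icc (-η0) η0, η ≠ 0 →
        IsUnit (Matrix.diagonal (fun i => γ i η) +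
            (Complex.I * (η : ℂ))⁻¹ • L.map Complex.ofReal) ∧
          ‖(Matrix.diagonal (fun i => γ i η) +
              (Complex.I * (η : ℂ))⁻¹ • L.map Complex.ofReal)⁻¹ -
            (∑ i, γ i η)⁻¹ • Matrix.vecMulVec 1 1‖ ≤ ε := by
  intro ε hε
  have hnR : (0:ℝ) < ((m + 2 : ℕ) : ℝ) := by positivity
  set C : ℝ := 1 + M1 * M2 with hCdef
  have hC : 0 < C := by positivity
  set Λ : ℝ := 2 * η0 * C * (M2 + C / ε) with hΛdef
  have hΛ : 0 < Λ := by positivity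
  refine ⟨Λ, hΛ, ?_⟩
  intro L hsym hpsd hL1 hlam η hη hηne
  have hs : (∑ i, γ i η) ≠ 0 := hsum η hη
  set s : ℂ := ∑ i, γ i η with hsdef
  set g : Fin (m+2) → ℂ := fun i => γ i η with hgdef
  set Lc : Matrix (Fin (m+2)) (Fin (m+2)) ℂ := L.map Complex.ofReal with hLcdef
  set A : Matrix (Fin (m+2)) (Fin (m+2)) ℂ :=
    Matrix.diagonal g + (Complex.I * (η:ℂ))⁻¹ • Lc with hAdef
  have hγb : ∀ i, ‖g i‖ ≤ M2 := hgi η hη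
  have hsinv : ‖s⁻¹‖ * ((m + 2 : ℕ) : ℝ) ≤ M1 := by
    have h := hbar η hη
    rw [norm_mul] at h
    have hcn : ‖((m + 2 : ℕ) : ℂ)‖ = ((m + 2 : ℕ) : ℝ) := by
      rw [show ((m + 2 : ℕ) : ℂ) = (((m + 2 : ℕ) : ℝ) : ℂ) by push_cast; ring,
        Complex.norm_real, Real.norm_eq_abs, abs_of_nonneg hnR.le]
    rw [hcn] at h
    linarith [h]
  have hηabs : |η| ≤ η0 := abs_le.mpr ⟨hη.1, hη.2⟩
  have hIη : Complex.I * (η:ℂ) ≠ 0 := by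
    simp [Complex.I_ne_zero, Complex.ofReal_eq_zero, hηne]
  have hIηnorm : ‖Complex.I * (η:ℂ)‖ = |η| := by
    rw [norm_mul, Complex.norm_I, one_mul, Complex.norm_real, Real.norm_eq_abs]
  have sqn_sq : Real.sqrt ((m + 2 : ℕ) : ℝ) ^ 2 = ((m + 2 : ℕ) : ℝ) := Real.sq_sqrt hnR.le
  have sqn_nonneg : (0:ℝ) ≤ Real.sqrt ((m + 2 : ℕ) : ℝ) := Real.sqrt_nonneg _
  -- the Laplacian kills the ones vector
  have hLc1 : Lc *ᵥ (1 : Fin (m+2) → ℂ) = 0 := by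
    funext i
    have hLi : ∑ j, L i j = 0 := by
      have := congrFun hL1 i
      simpa [Matrix.mulVec, dotProduct] using this
    simp only [hLcdef, Matrix.mulVec, dotProduct, Matrix.map_apply, Pi.one_apply, mul_one,
      Pi.zero_apply]
    rw [← Complex.ofReal_sum]
    rw [hLi]
    simp
  have hLcleft : ∀ v : Fin (m+2) → ℂ, (1 : Fin (m+2) → ℂ) ⬝ᵥ (Lc *ᵥ v) = 0 := by
    intro v
    have hLj : ∀ j, ∑ i, L i j = 0 := by
      intro j
      have h1 := congrFun hL1 j
      simp only [Matrix.mulVec, dotProduct, Pi.one_apply, mul_one, Pi.zero_apply] at h1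
      rw [← h1]
      refine Finset.sum_congr rfl fun i _ => ?_
      have := congrFun (congrFun hsym.eq j) i
      simpa [Matrix.transpose_apply] using this
    rw [Matrix.dotProduct_mulVec]
    have hvm : (1 : Fin (m+2) → ℂ) ᵥ* Lc = 0 := by
      funext j
      simp only [Matrix.vecMul, dotProduct, Pi.one_apply, one_mul, Matrix.map_apply,
        hLcdef, Pi.zero_apply]
      rw [← Complex.ofReal_sum, hLj j]
      simp
    rw [hvm]
    simp
  -- the key estimate
  have key : ∀ v u : Fin (m+2) → ℂ, A *ᵥ v = u →
      Stmt0Aux.enorm (v - (s⁻¹ * ((1 : Fin (m+2) → ℂ) ⬝ᵥ u)) • (1 : Fin (m+2) → ℂ)) ≤ ε * Stmt0Aux.enorm u := by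
    intro v u huv
    have hnC : ((m + 2 : ℕ) : ℂ) ≠ 0 := Nat.cast_ne_zero.mpr (by omega)
    set α : ℂ := (((m + 2 : ℕ) : ℂ))⁻¹ * ∑ i, v i with hαdef
    set w : Fin (m+2) → ℂ := v - α • (1 : Fin (m+2) → ℂ) with hwdef
    have hvw : v = α • (1 : Fin (m+2) → ℂ) + w := by
      rw [hwdef]; abel
    have hw0 : ∑ i, w i = 0 := by
      have hcard : ∑ _i : Fin (m+2), α = ((m + 2 : ℕ) : ℂ) * α := by
        rw [Finset.sum_const, Finset.card_univ, Fintype.card_fin, nsmul_eq_mul]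
      simp only [hwdef, Pi.sub_apply, Pi.smul_apply, Pi.one_apply, smul_eq_mul, mul_one,
        Finset.sum_sub_distrib]
      rw [hcard, hαdef, ← mul_assoc, mul_inv_cancel₀ hnC, one_mul, sub_self]
    -- split the equation
    have heq : Matrix.diagonal g *ᵥ v + (Complex.I * (η:ℂ))⁻¹ • (Lc *ᵥ v) = u := by
      rw [← huv, hAdef, Matrix.add_mulVec, Matrix.smul_mulVec]
    have hLcv : Lc *ᵥ v = Lc *ᵥ w := by
      rw [hvw, Matrix.mulVec_add, Matrix.mulVec_smul, hLc1]
      simp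
    -- ones component
    have hE1 : s * α + g ⬝ᵥ w = (1 : Fin (m+2) → ℂ) ⬝ᵥ u := by
      have h1 : (1 : Fin (m+2) → ℂ) ⬝ᵥ (Matrix.diagonal g *ᵥ v) = s * α + g ⬝ᵥ w := by
        have h2 : ∀ i, (Matrix.diagonal g *ᵥ v) i = g i * v i := fun i => by
          rw [Matrix.mulVec_diagonal]
        simp only [dotProduct, Pi.one_apply, one_mul, h2]
        rw [hsdef, Finset.sum_mul]
        rw [← Finset.sum_add_distrib]
        refine Finset.sum_congr rfl fun i _ => ?_
        rw [hvw]
        simp only [Pi.add_apply, Pi.smul_apply, Pi.one_apply, smul_eq_mul, mul_one, hgdef,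
          dotProduct]
        ring
      have h3 := congrArg (fun z => (1 : Fin (m+2) → ℂ) ⬝ᵥ z) heq
      simp only [dotProduct_add, dotProduct_smul, hLcv, hLcleft, smul_eq_mul,
        mul_zero, add_zero] at h3
      rw [h1] at h3
      exact h3
    have hαval : α = s⁻¹ * ((1 : Fin (m+2) → ℂ) ⬝ᵥ u - g ⬝ᵥ w) := by
      field_simp
      linear_combination hE1
    -- w component
    have hdot2 : star w ⬝ᵥ (Matrix.diagonal g *ᵥ v)
        + (Complex.I * (η:ℂ))⁻¹ * (star w ⬝ᵥ (Lc *ᵥ w)) = star w ⬝ᵥ u := by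
      have h3 := congrArg (fun z => star w ⬝ᵥ z) heq
      simp only [dotProduct_add, dotProduct_smul, hLcv, smul_eq_mul] at h3
      exact h3
    have hz : star w ⬝ᵥ (Lc *ᵥ w)
        = (Complex.I * (η:ℂ)) * (star w ⬝ᵥ u - star w ⬝ᵥ (Matrix.diagonal g *ᵥ v)) := by
      have h1 : (Complex.I * (η:ℂ))⁻¹ * (star w ⬝ᵥ (Lc *ᵥ w))
          = star w ⬝ᵥ u - star w ⬝ᵥ (Matrix.diagonal g *ᵥ v) := by
        linear_combination hdot2
      rw [← h1, ← mul_assoc, mul_inv_cancel₀ hIη, one_mul]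
    -- norm estimates
    have hDv : Stmt0Aux.enorm (Matrix.diagonal g *ᵥ v) ≤ M2 * Stmt0Aux.enorm v := by
      refine Stmt0Aux.enorm_mono hM2.le fun i => ?_
      rw [Matrix.mulVec_diagonal, norm_mul]
      exact mul_le_mul_of_nonneg_right (hγb i) (norm_nonneg _)
    have hdotwu : ‖star w ⬝ᵥ u‖ ≤ Stmt0Aux.enorm w * Stmt0Aux.enorm u := by
      have := dot_le (star w) u
      rwa [Stmt0Aux.enorm_star] at this
    have hdotwD : ‖star w ⬝ᵥ (Matrix.diagonal g *ᵥ v)‖ ≤ Stmt0Aux.enorm w * (M2 * Stmt0Aux.enorm v) := by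
      have h1 := dot_le (star w) (Matrix.diagonal g *ᵥ v)
      rw [Stmt0Aux.enorm_star] at h1
      exact h1.trans (mul_le_mul_of_nonneg_left hDv (Stmt0Aux.enorm_nonneg _))
    have hre : Λ * Stmt0Aux.enorm w ^ 2 ≤ (star w ⬝ᵥ (Lc *ᵥ w)).re := by
      have h1 := rayleigh_cx L hpsd w hw0
      have h2 : Λ * Stmt0Aux.enorm w ^ 2 ≤ lambda2 L * Stmt0Aux.enorm w ^ 2 :=
        mul_le_mul_of_nonneg_right hlam (by positivity)
      rw [hLcdef]
      exact h2.trans h1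
    have hzb : (star w ⬝ᵥ (Lc *ᵥ w)).re ≤ η0 * (Stmt0Aux.enorm w * Stmt0Aux.enorm u + Stmt0Aux.enorm w * (M2 * Stmt0Aux.enorm v)) := by
      have h1 : (star w ⬝ᵥ (Lc *ᵥ w)).re ≤ ‖star w ⬝ᵥ (Lc *ᵥ w)‖ :=
        Complex.re_le_norm _
      have h2 : ‖star w ⬝ᵥ (Lc *ᵥ w)‖
          ≤ |η| * (Stmt0Aux.enorm w * Stmt0Aux.enorm u + Stmt0Aux.enorm w * (M2 * Stmt0Aux.enorm v)) := by
        rw [hz, norm_mul, hIηnorm]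
        refine mul_le_mul_of_nonneg_left ?_ (abs_nonneg η)
        exact (norm_sub_le _ _).trans (add_le_add hdotwu hdotwD)
      refine h1.trans (h2.trans ?_)
      refine mul_le_mul_of_nonneg_right hηabs ?_
      have := Stmt0Aux.enorm_nonneg w
      have := Stmt0Aux.enorm_nonneg u
      have := Stmt0Aux.enorm_nonneg v
      positivity
    -- bound on v
    have hEU : ‖(1 : Fin (m+2) → ℂ) ⬝ᵥ u‖ ≤ Real.sqrt ((m + 2 : ℕ) : ℝ) * Stmt0Aux.enorm u := by
      have := dot_le (1 : Fin (m+2) → ℂ) u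
      rwa [Stmt0Aux.enorm_one] at this
    have hGW : ‖g ⬝ᵥ w‖ ≤ M2 * Real.sqrt ((m + 2 : ℕ) : ℝ) * Stmt0Aux.enorm w := by
      have h1 := dot_le g w
      have h2 : Stmt0Aux.enorm g ≤ M2 * Stmt0Aux.enorm (1 : Fin (m+2) → ℂ) := by
        refine Stmt0Aux.enorm_mono hM2.le fun i => ?_
        simp only [Pi.one_apply, norm_one, mul_one]
        exact hγb i
      rw [Stmt0Aux.enorm_one] at h2
      calc ‖g ⬝ᵥ w‖ ≤ Stmt0Aux.enorm g * Stmt0Aux.enorm w := h1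
        _ ≤ M2 * Real.sqrt ((m + 2 : ℕ) : ℝ) * Stmt0Aux.enorm w :=
            mul_le_mul_of_nonneg_right h2 (Stmt0Aux.enorm_nonneg _)
    have hαb : ‖α‖ ≤ ‖s⁻¹‖ * (Real.sqrt ((m + 2 : ℕ) : ℝ) * Stmt0Aux.enorm u
        + M2 * Real.sqrt ((m + 2 : ℕ) : ℝ) * Stmt0Aux.enorm w) := by
      rw [hαval, norm_mul]
      refine mul_le_mul_of_nonneg_left ?_ (norm_nonneg _)
      exact (norm_sub_le _ _).trans (add_le_add hEU hGW)
    have hV : Stmt0Aux.enorm v ≤ M1 * Stmt0Aux.enorm u + C * Stmt0Aux.enorm w := by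
      have h1 : Stmt0Aux.enorm v ≤ ‖α‖ * Real.sqrt ((m + 2 : ℕ) : ℝ) + Stmt0Aux.enorm w := by
        rw [hvw]
        refine (Stmt0Aux.enorm_add_le _ _).trans ?_
        rw [Stmt0Aux.enorm_smul, Stmt0Aux.enorm_one]
      have h2 : ‖α‖ * Real.sqrt ((m + 2 : ℕ) : ℝ)
          ≤ ‖s⁻¹‖ * ((m + 2 : ℕ) : ℝ) * (Stmt0Aux.enorm u + M2 * Stmt0Aux.enorm w) := by
        have h3 := mul_le_mul_of_nonneg_right hαb sqn_nonneg
        calc ‖α‖ * Real.sqrt ((m + 2 : ℕ) : ℝ)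
            ≤ (‖s⁻¹‖ * (Real.sqrt ((m + 2 : ℕ) : ℝ) * Stmt0Aux.enorm u
              + M2 * Real.sqrt ((m + 2 : ℕ) : ℝ) * Stmt0Aux.enorm w)) * Real.sqrt ((m + 2 : ℕ) : ℝ) := h3
          _ = ‖s⁻¹‖ * (Real.sqrt ((m + 2 : ℕ) : ℝ) ^ 2 * Stmt0Aux.enorm u
              + M2 * Real.sqrt ((m + 2 : ℕ) : ℝ) ^ 2 * Stmt0Aux.enorm w) := by ring
          _ = ‖s⁻¹‖ * ((m + 2 : ℕ) : ℝ) * (Stmt0Aux.enorm u + M2 * Stmt0Aux.enorm w) := by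
              rw [sqn_sq]; ring
      have h4 : ‖s⁻¹‖ * ((m + 2 : ℕ) : ℝ) * (Stmt0Aux.enorm u + M2 * Stmt0Aux.enorm w)
          ≤ M1 * (Stmt0Aux.enorm u + M2 * Stmt0Aux.enorm w) := by
        refine mul_le_mul_of_nonneg_right hsinv ?_
        have := Stmt0Aux.enorm_nonneg u
        have := Stmt0Aux.enorm_nonneg w
        positivity
      calc Stmt0Aux.enorm v ≤ ‖α‖ * Real.sqrt ((m + 2 : ℕ) : ℝ) + Stmt0Aux.enorm w := h1
        _ ≤ ‖s⁻¹‖ * ((m + 2 : ℕ) : ℝ) * (Stmt0Aux.enorm u + M2 * Stmt0Aux.enorm w) + Stmt0Aux.enorm w := by linarith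
        _ ≤ M1 * (Stmt0Aux.enorm u + M2 * Stmt0Aux.enorm w) + Stmt0Aux.enorm w := by linarith
        _ = M1 * Stmt0Aux.enorm u + C * Stmt0Aux.enorm w := by rw [hCdef]; ring
    -- quadratic inequality in Stmt0Aux.enorm w
    have hQ : Λ * Stmt0Aux.enorm w ^ 2 ≤ η0 * C * Stmt0Aux.enorm u * Stmt0Aux.enorm w + η0 * M2 * C * Stmt0Aux.enorm w ^ 2 := by
      have h1 := hre.trans hzb
      have h2 : Stmt0Aux.enorm w * (M2 * Stmt0Aux.enorm v) ≤ Stmt0Aux.enorm w * (M2 * (M1 * Stmt0Aux.enorm u + C * Stmt0Aux.enorm w)) := by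
        refine mul_le_mul_of_nonneg_left ?_ (Stmt0Aux.enorm_nonneg w)
        exact mul_le_mul_of_nonneg_left hV hM2.le
      have h3 : η0 * (Stmt0Aux.enorm w * Stmt0Aux.enorm u + Stmt0Aux.enorm w * (M2 * Stmt0Aux.enorm v))
          ≤ η0 * (Stmt0Aux.enorm w * Stmt0Aux.enorm u + Stmt0Aux.enorm w * (M2 * (M1 * Stmt0Aux.enorm u + C * Stmt0Aux.enorm w))) :=
        mul_le_mul_of_nonneg_left (by linarith) hη0.le
      have h4 : η0 * (Stmt0Aux.enorm w * Stmt0Aux.enorm u + Stmt0Aux.enorm w * (M2 * (M1 * Stmt0Aux.enorm u + C * Stmt0Aux.enorm w)))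
          = η0 * C * Stmt0Aux.enorm u * Stmt0Aux.enorm w + η0 * M2 * C * Stmt0Aux.enorm w ^ 2 := by
        rw [hCdef]; ring
      linarith [h1, h3, h4.le]
    have hM2ub : 2 * η0 * M2 * C ≤ Λ := by
      have hpos : (0:ℝ) ≤ 2 * η0 * C * (C / ε) := by positivity
      have hsplit : 2 * η0 * C * (M2 + C / ε)
          = 2 * η0 * M2 * C + 2 * η0 * C * (C / ε) := by ring
      rw [hΛdef, hsplit]
      linarith
    have hW : Stmt0Aux.enorm w ≤ 2 * η0 * C / Λ * Stmt0Aux.enorm u := by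
      rcases eq_or_lt_of_le (Stmt0Aux.enorm_nonneg w) with h0 | h0
      · rw [← h0]
        have := Stmt0Aux.enorm_nonneg u
        positivity
      · exact quad_bound hΛ h0 (Stmt0Aux.enorm_nonneg u) hM2ub hQ
    -- final identity and bound
    have hid : v - (s⁻¹ * ((1 : Fin (m+2) → ℂ) ⬝ᵥ u)) • (1 : Fin (m+2) → ℂ)
        = w + (-(s⁻¹ * (g ⬝ᵥ w))) • (1 : Fin (m+2) → ℂ) := by
      funext i
      rw [hvw]
      simp only [Pi.sub_apply, Pi.add_apply, Pi.smul_apply, Pi.one_apply, smul_eq_mul, mul_one]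
      rw [hαval]
      ring
    have hfin : Stmt0Aux.enorm (v - (s⁻¹ * ((1 : Fin (m+2) → ℂ) ⬝ᵥ u)) • (1 : Fin (m+2) → ℂ))
        ≤ C * Stmt0Aux.enorm w := by
      rw [hid]
      refine (Stmt0Aux.enorm_add_le _ _).trans ?_
      rw [Stmt0Aux.enorm_smul, Stmt0Aux.enorm_one, norm_neg, norm_mul]
      have h1 : ‖s⁻¹‖ * ‖g ⬝ᵥ w‖ * Real.sqrt ((m + 2 : ℕ) : ℝ)
          ≤ M1 * M2 * Stmt0Aux.enorm w := by
        have h2 : ‖s⁻¹‖ * ‖g ⬝ᵥ w‖ ≤ ‖s⁻¹‖ * (M2 * Real.sqrt ((m + 2 : ℕ) : ℝ) * Stmt0Aux.enorm w) :=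
          mul_le_mul_of_nonneg_left hGW (norm_nonneg _)
        have h3 := mul_le_mul_of_nonneg_right h2 sqn_nonneg
        calc ‖s⁻¹‖ * ‖g ⬝ᵥ w‖ * Real.sqrt ((m + 2 : ℕ) : ℝ)
            ≤ ‖s⁻¹‖ * (M2 * Real.sqrt ((m + 2 : ℕ) : ℝ) * Stmt0Aux.enorm w)
              * Real.sqrt ((m + 2 : ℕ) : ℝ) := h3
          _ = ‖s⁻¹‖ * (M2 * Real.sqrt ((m + 2 : ℕ) : ℝ) ^ 2 * Stmt0Aux.enorm w) := by ring
          _ = (‖s⁻¹‖ * ((m + 2 : ℕ) : ℝ)) * (M2 * Stmt0Aux.enorm w) := by rw [sqn_sq]; ring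
          _ ≤ M1 * (M2 * Stmt0Aux.enorm w) := by
              refine mul_le_mul_of_nonneg_right hsinv ?_
              have := Stmt0Aux.enorm_nonneg w
              positivity
          _ = M1 * M2 * Stmt0Aux.enorm w := by ring
      rw [hCdef]
      linarith [h1]
    have hcoef : C * (2 * η0 * C / Λ) ≤ ε := by
      rw [mul_div_assoc', div_le_iff₀ hΛ]
      have hεΛ : ε * Λ = 2 * η0 * C * ε * M2 + 2 * η0 * C * C := by
        rw [hΛdef]
        field_simp
      rw [hεΛ]
      have hpos : (0:ℝ) ≤ 2 * η0 * C * ε * M2 := by positivity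
      nlinarith [hpos]
    calc Stmt0Aux.enorm (v - (s⁻¹ * ((1 : Fin (m+2) → ℂ) ⬝ᵥ u)) • (1 : Fin (m+2) → ℂ))
        ≤ C * Stmt0Aux.enorm w := hfin
      _ ≤ C * (2 * η0 * C / Λ * Stmt0Aux.enorm u) := mul_le_mul_of_nonneg_left hW hC.le
      _ = (C * (2 * η0 * C / Λ)) * Stmt0Aux.enorm u := by ring
      _ ≤ ε * Stmt0Aux.enorm u := mul_le_mul_of_nonneg_right hcoef (Stmt0Aux.enorm_nonneg u)
  -- injectivity, hence invertibility
  have hinj : Function.Injective A.mulVec := by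
    intro x y hxy
    have hsub : A *ᵥ (x - y) = 0 := by
      rw [Matrix.mulVec_sub, hxy, sub_self]
    have h1 := key (x - y) 0 hsub
    simp only [dotProduct_zero, mul_zero, zero_smul, sub_zero, Stmt0Aux.enorm_zero,
      mul_zero] at h1
    have := (Stmt0Aux.enorm_zero_iff _).mp h1
    exact sub_eq_zero.mp this
  have hunit : IsUnit A := Matrix.mulVec_injective_iff_isUnit.mp hinj
  refine ⟨hunit, ?_⟩
  -- norm bound
  have hdet : IsUnit A.det := (Matrix.isUnit_iff_isUnit_det A).mp hunit
  have hAAinv : A * A⁻¹ = 1 := Matrix.mul_nonsing_inv A hdet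
  rw [Matrix.cstar_norm_def]
  refine ContinuousLinearMap.opNorm_le_bound _ hε.le fun x => ?_
  set u : Fin (m+2) → ℂ := WithLp.equiv 2 (Fin (m+2) → ℂ) x with hudef
  have hxu : (WithLp.equiv 2 (Fin (m+2) → ℂ)).symm u = x := by
    rw [hudef]; simp
  have h1 : Matrix.toEuclideanCLM (𝕜 := ℂ) (A⁻¹ - s⁻¹ • Matrix.vecMulVec 1 1) x
      = (WithLp.equiv 2 (Fin (m+2) → ℂ)).symm ((A⁻¹ - s⁻¹ • Matrix.vecMulVec 1 1) *ᵥ u) := by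
    rw [← hxu, Matrix.toEuclideanCLM_toLp]; rfl
  set v : Fin (m+2) → ℂ := A⁻¹ *ᵥ u with hvdef
  have hAv : A *ᵥ v = u := by
    rw [hvdef, Matrix.mulVec_mulVec, hAAinv, Matrix.one_mulVec]
  have h2 : (A⁻¹ - s⁻¹ • Matrix.vecMulVec 1 1) *ᵥ u
      = v - (s⁻¹ * ((1 : Fin (m+2) → ℂ) ⬝ᵥ u)) • (1 : Fin (m+2) → ℂ) := by
    rw [Matrix.sub_mulVec, Matrix.smul_mulVec]
    congr 1
    have h3 : Matrix.vecMulVec (1 : Fin (m+2) → ℂ) 1 *ᵥ u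
        = ((1 : Fin (m+2) → ℂ) ⬝ᵥ u) • (1 : Fin (m+2) → ℂ) := by
      funext i
      simp [Matrix.vecMulVec_apply, Matrix.mulVec, dotProduct]
    rw [h3, smul_smul]
  have hnorm1 : ‖Matrix.toEuclideanCLM (𝕜 := ℂ) (A⁻¹ - s⁻¹ • Matrix.vecMulVec 1 1) x‖
      = Stmt0Aux.enorm (v - (s⁻¹ * ((1 : Fin (m+2) → ℂ) ⬝ᵥ u)) • (1 : Fin (m+2) → ℂ)) := by
    rw [h1, h2]; rfl
  have hnormx : ‖x‖ = Stmt0Aux.enorm u := by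
    rw [← hxu]; rfl
  rw [hnorm1, hnormx]
  exact key v u hAv
end

section
/- Let n ≥ 2, let L be a real symmetric positive-semidefinite n×n matrix with L·𝟙 = 0 and eigenvalues 0 = λ1(L) ≤ λ2(L) ≤ … ≤ λn(L), let s0 ∈ ℂ with s0 ≠ 0, and let γ_1,…,γ_n ∈ ℂ with ∑_{i=1}^n γ_i ≠ 0. Set D = diag(γ_1,…,γ_n) and ḡ = n · (∑_{i=1}^n γ_i)^{-1}, and suppose M1, M2 > 0 satisfy |ḡ| ≤ M1 and max_{1≤i≤n} |γ_i| ≤ M2. If λ2(L)/|s0| > M2 + M1·M2², then the complex matrix D + L/s0 is invertible and ‖(D + L/s0)^{-1} − (1/n)·ḡ·𝟙𝟙ᵀ‖ ≤ (M1²M2² + 2M1M2 + M1M2²/(λ2(L)/|s0| − M2)) / (λ2(L)/|s0| − M2 − M1M2²) + 1/(λ2(L)/|s0| − M2), where ‖·‖ is the spectral norm and 𝟙 ∈ ℝ^n is the all-ones vector. -/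
open Matrix
open scoped Matrix.Norms.L2Operator RealInnerProductSpace

variable {n : ℕ}

lemma normsq_eq (𝕜 : Type*) [RCLike 𝕜] (f : Fin n → 𝕜) :
    ‖(WithLp.equiv 2 (Fin n → 𝕜)).symm f‖ ^ 2 = ∑ i, ‖f i‖ ^ 2 := by
  rw [EuclideanSpace.norm_eq, Real.sq_sqrt (by positivity)]
  simp [WithLp.equiv_symm_apply, PiLp.toLp_apply]

lemma opnorm_le {A : Matrix (Fin n) (Fin n) ℂ} {c : ℝ} (hc : 0 ≤ c)
    (h : ∀ x : Fin n → ℂ, ‖(WithLp.equiv 2 (Fin n → ℂ)).symm (A *ᵥ x)‖ ≤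
      c * ‖(WithLp.equiv 2 (Fin n → ℂ)).symm x‖) : ‖A‖ ≤ c := by
  rw [Matrix.l2_opNorm_def]
  apply ContinuousLinearMap.opNorm_le_bound _ hc
  intro x
  have := h (WithLp.equiv 2 (Fin n → ℂ) x)
  simpa [Matrix.toEuclideanLin_apply] using this

lemma mulVec_norm_le (A : Matrix (Fin n) (Fin n) ℂ) (x : Fin n → ℂ) :
    ‖(WithLp.equiv 2 (Fin n → ℂ)).symm (A *ᵥ x)‖ ≤
      ‖A‖ * ‖(WithLp.equiv 2 (Fin n → ℂ)).symm x‖ := by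
  simpa using Matrix.l2_opNorm_mulVec A ((WithLp.equiv 2 (Fin n → ℂ)).symm x)

lemma norm_le_one_of_herm_idem {P : Matrix (Fin n) (Fin n) ℂ}
    (h1 : Pᴴ = P) (h2 : P * P = P) : ‖P‖ ≤ 1 := by
  have := Matrix.l2_opNorm_conjTranspose_mul_self P
  rw [h1, h2] at this
  nlinarith [norm_nonneg P]

lemma isUnit_of_mulVec_injective {A : Matrix (Fin n) (Fin n) ℂ}
    (h : ∀ v, A *ᵥ v = 0 → v = 0) : IsUnit A := by
  apply Matrix.mulVec_injective_iff_isUnit.mp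
  intro x y hxy
  have : A *ᵥ (x - y) = 0 := by rw [Matrix.mulVec_sub, hxy, sub_self]
  have := h _ this
  exact sub_eq_zero.mp this

lemma rayleigh_eq (L : Matrix (Fin n) (Fin n) ℝ) (v : EuclideanSpace ℝ (Fin n)) :
    ⟪v, Matrix.toEuclideanCLM (𝕜 := ℝ) L v⟫ =
      (WithLp.equiv 2 (Fin n → ℝ) v) ⬝ᵥ (L *ᵥ (WithLp.equiv 2 (Fin n → ℝ) v)) := by
  simp only [PiLp.inner_apply, RCLike.inner_apply, conj_trivial, dotProduct,
    Matrix.mulVec, dotProduct]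
  exact Finset.sum_congr rfl fun x _ => by rw [mul_comm]; rfl

lemma lamA (L : Matrix (Fin n) (Fin n) ℝ) (hpsd : L.PosSemidef)
    (w : Fin n → ℝ) (hw : ∑ i, w i = 0) :
    lambda2 L * ‖(WithLp.equiv 2 (Fin n → ℝ)).symm w‖ ^ 2 ≤ w ⬝ᵥ (L *ᵥ w) := by
  by_cases hw0 : w = 0
  · simp [hw0]
  set w' : EuclideanSpace ℝ (Fin n) := (WithLp.equiv 2 (Fin n → ℝ)).symm w with hw'
  have hnw : ‖w'‖ ≠ 0 := by
    simp only [ne_eq, norm_eq_zero]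
    intro h
    exact hw0 (by simpa [hw'] using congrArg (WithLp.equiv 2 (Fin n → ℝ)) h)
  have hnwpos : 0 < ‖w'‖ := lt_of_le_of_ne (norm_nonneg _) (Ne.symm hnw)
  set u : EuclideanSpace ℝ (Fin n) := ‖w'‖⁻¹ • w' with hu
  have hw1 : ⟪w', (WithLp.equiv 2 (Fin n → ℝ)).symm 1⟫ = 0 := by
    simp only [hw', PiLp.inner_apply, RCLike.inner_apply, conj_trivial,
      WithLp.equiv_symm_apply, PiLp.toLp_apply, Pi.one_apply, mul_one]
    simpa using hw
  have hu1 : ⟪u, (WithLp.equiv 2 (Fin n → ℝ)).symm 1⟫ = 0 := by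
    rw [hu, inner_smul_left, hw1]
    simp
  have hun : ‖u‖ = 1 := by rw [hu, norm_smul]; simp [abs_of_pos hnwpos, inv_mul_cancel₀ hnw]
  have hbdd : BddBelow (Set.range fun v : {v : EuclideanSpace ℝ (Fin n) //
      ⟪v, (WithLp.equiv 2 (Fin n → ℝ)).symm 1⟫ = 0 ∧ ‖v‖ = 1} =>
      ⟪(v : EuclideanSpace ℝ (Fin n)),
        Matrix.toEuclideanCLM (𝕜 := ℝ) L (v : EuclideanSpace ℝ (Fin n))⟫) := by
    refine ⟨0, ?_⟩
    rintro x ⟨v, rfl⟩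
    dsimp only
    rw [rayleigh_eq]
    simpa using hpsd.dotProduct_mulVec_nonneg (WithLp.equiv 2 (Fin n → ℝ) (v : EuclideanSpace ℝ (Fin n)))
  have hle : lambda2 L ≤ ⟪u, Matrix.toEuclideanCLM (𝕜 := ℝ) L u⟫ :=
    ciInf_le hbdd (⟨u, hu1, hun⟩ : {v : EuclideanSpace ℝ (Fin n) //
      ⟪v, (WithLp.equiv 2 (Fin n → ℝ)).symm 1⟫ = 0 ∧ ‖v‖ = 1})
  have hray : ⟪u, Matrix.toEuclideanCLM (𝕜 := ℝ) L u⟫ =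
      ‖w'‖⁻¹ ^ 2 * (w ⬝ᵥ (L *ᵥ w)) := by
    rw [hu, inner_smul_left, (Matrix.toEuclideanCLM (𝕜 := ℝ) L).map_smul,
      inner_smul_right, rayleigh_eq]
    simp [hw', Equiv.apply_symm_apply]
    ring
  rw [hray] at hle
  have h2 := mul_le_mul_of_nonneg_right hle (le_of_lt (pow_pos hnwpos 2))
  calc lambda2 L * ‖w'‖ ^ 2 ≤ ‖w'‖⁻¹ ^ 2 * (w ⬝ᵥ (L *ᵥ w)) * ‖w'‖ ^ 2 := h2
    _ = w ⬝ᵥ (L *ᵥ w) := by field_simp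


lemma lamB (L : Matrix (Fin n) (Fin n) ℝ) (hpsd : L.PosSemidef)
    (w : Fin n → ℝ) (hw : ∑ i, w i = 0) :
    lambda2 L * ‖(WithLp.equiv 2 (Fin n → ℝ)).symm w‖ ≤
      ‖(WithLp.equiv 2 (Fin n → ℝ)).symm (L *ᵥ w)‖ := by
  by_cases hw0 : w = 0
  · simp [hw0, Matrix.mulVec_zero]
  have h1 := lamA L hpsd w hw
  set w' : EuclideanSpace ℝ (Fin n) := (WithLp.equiv 2 (Fin n → ℝ)).symm w with hw'
  set z' : EuclideanSpace ℝ (Fin n) := (WithLp.equiv 2 (Fin n → ℝ)).symm (L *ᵥ w) with hz'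
  have hdot : w ⬝ᵥ (L *ᵥ w) = ⟪w', z'⟫ := by
    simp [hw', hz', PiLp.inner_apply, dotProduct, mul_comm]
  have hcs : ⟪w', z'⟫ ≤ ‖w'‖ * ‖z'‖ := real_inner_le_norm w' z'
  have hnw : (0:ℝ) < ‖w'‖ := by
    have : w' ≠ 0 := by
      intro h
      exact hw0 (by simpa [hw'] using congrArg (WithLp.equiv 2 (Fin n → ℝ)) h)
    exact norm_pos_iff.mpr this
  have : lambda2 L * ‖w'‖ ^ 2 ≤ ‖w'‖ * ‖z'‖ := by
    calc lambda2 L * ‖w'‖ ^ 2 ≤ w ⬝ᵥ (L *ᵥ w) := h1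
      _ = ⟪w', z'⟫ := hdot
      _ ≤ ‖w'‖ * ‖z'‖ := hcs
  nlinarith

lemma lamC (L : Matrix (Fin n) (Fin n) ℝ) (hpsd : L.PosSemidef)
    (hl2 : 0 ≤ lambda2 L)
    (v : Fin n → ℂ) (hv : ∑ i, v i = 0) :
    lambda2 L * ‖(WithLp.equiv 2 (Fin n → ℂ)).symm v‖ ≤
      ‖(WithLp.equiv 2 (Fin n → ℂ)).symm (L.map Complex.ofReal *ᵥ v)‖ := by
  set a : Fin n → ℝ := fun i => (v i).re with ha
  set b : Fin n → ℝ := fun i => (v i).im with hb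
  have hsa : ∑ i, a i = 0 := by
    have := congrArg Complex.re hv
    simpa [ha, Complex.re_sum] using this
  have hsb : ∑ i, b i = 0 := by
    have := congrArg Complex.im hv
    simpa [hb, Complex.im_sum] using this
  have hre : ∀ i, ((L.map Complex.ofReal *ᵥ v) i).re = (L *ᵥ a) i := by
    intro i
    simp [Matrix.mulVec, dotProduct, Complex.re_sum, Complex.mul_re, ha]
  have him : ∀ i, ((L.map Complex.ofReal *ᵥ v) i).im = (L *ᵥ b) i := by
    intro i
    simp [Matrix.mulVec, dotProduct, Complex.im_sum, Complex.mul_im, hb]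
  have key : ‖(WithLp.equiv 2 (Fin n → ℂ)).symm (L.map Complex.ofReal *ᵥ v)‖ ^ 2 =
      ‖(WithLp.equiv 2 (Fin n → ℝ)).symm (L *ᵥ a)‖ ^ 2 +
      ‖(WithLp.equiv 2 (Fin n → ℝ)).symm (L *ᵥ b)‖ ^ 2 := by
    rw [normsq_eq, normsq_eq, normsq_eq, ← Finset.sum_add_distrib]
    refine Finset.sum_congr rfl fun i _ => ?_
    rw [← hre i, ← him i]
    simp [Complex.sq_norm, Complex.normSq_apply, Real.norm_eq_abs,
      sq_abs]
    ring
  have keyv : ‖(WithLp.equiv 2 (Fin n → ℂ)).symm v‖ ^ 2 =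
      ‖(WithLp.equiv 2 (Fin n → ℝ)).symm a‖ ^ 2 +
      ‖(WithLp.equiv 2 (Fin n → ℝ)).symm b‖ ^ 2 := by
    rw [normsq_eq, normsq_eq, normsq_eq, ← Finset.sum_add_distrib]
    refine Finset.sum_congr rfl fun i _ => ?_
    simp [Complex.sq_norm, Complex.normSq_apply, Real.norm_eq_abs,
      sq_abs, ha, hb]
    ring
  have hA := lamB L hpsd a hsa
  have hB := lamB L hpsd b hsb
  refine le_of_pow_le_pow_left₀ two_ne_zero (norm_nonneg _) ?_
  have expand : (lambda2 L * ‖(WithLp.equiv 2 (Fin n → ℂ)).symm v‖) ^ 2 =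
      (lambda2 L) ^ 2 * (‖(WithLp.equiv 2 (Fin n → ℝ)).symm a‖ ^ 2 +
        ‖(WithLp.equiv 2 (Fin n → ℝ)).symm b‖ ^ 2) := by
    rw [mul_pow, keyv]
  rw [expand, key]
  nlinarith [norm_nonneg ((WithLp.equiv 2 (Fin n → ℝ)).symm a),
    norm_nonneg ((WithLp.equiv 2 (Fin n → ℝ)).symm b),
    norm_nonneg ((WithLp.equiv 2 (Fin n → ℝ)).symm (L *ᵥ a)),
    norm_nonneg ((WithLp.equiv 2 (Fin n → ℝ)).symm (L *ᵥ b)),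
    mul_le_mul_of_nonneg_left hA hl2, mul_le_mul_of_nonneg_left hB hl2]



set_option maxHeartbeats 12000000

/-- **Lemma 2.** For `n = m+2 ≥ 2`, a real symmetric PSD Laplacian `L`
with `L 𝟙 = 0`, `s0 ≠ 0`, `γᵢ = gᵢ⁻¹(s0)` with `∑ γᵢ ≠ 0`, `ḡ = n (∑ γᵢ)⁻¹`,
`|ḡ| ≤ M1`, `max |γᵢ| ≤ M2` and `λ₂(L)/|s0| > M2 + M1 M2²`, the matrix `D + L/s0`
is invertible and `‖(D + L/s0)⁻¹ - (1/n) ḡ 𝟙𝟙ᵀ‖` obeys the stated bound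
(spectral norm). -/
theorem stmt_2 {m : ℕ} (L : Matrix (Fin (m + 2)) (Fin (m + 2)) ℝ)
    (hsym : L.IsSymm) (hpsd : L.PosSemidef) (hL1 : L *ᵥ 1 = 0)
    (s0 : ℂ) (hs0 : s0 ≠ 0)
    (γ : Fin (m + 2) → ℂ) (hγ : ∑ i, γ i ≠ 0)
    (g : ℂ) (hgdef : g = ((m + 2 : ℕ) : ℂ) * (∑ i, γ i)⁻¹)
    (M1 M2 : ℝ) (hM1 : 0 < M1) (hM2 : 0 < M2)
    (hgM : ‖g‖ ≤ M1) (hγM : ∀ i, ‖γ i‖ ≤ M2)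
    (hlam : M2 + M1 * M2 ^ 2 < lambda2 L / ‖s0‖) :
    IsUnit (Matrix.diagonal γ + s0⁻¹ • L.map Complex.ofReal) ∧
      ‖(Matrix.diagonal γ + s0⁻¹ • L.map Complex.ofReal)⁻¹ -
          (((m + 2 : ℕ) : ℂ))⁻¹ • g • Matrix.vecMulVec 1 1‖ ≤
        (M1 ^ 2 * M2 ^ 2 + 2 * M1 * M2 +
              M1 * M2 ^ 2 / (lambda2 L / ‖s0‖ - M2)) /
            (lambda2 L / ‖s0‖ - M2 - M1 * M2 ^ 2) +
          1 / (lambda2 L / ‖s0‖ - M2) := by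
  classical
  have hn0 : ((m + 2 : ℕ) : ℂ) ≠ 0 := Nat.cast_ne_zero.mpr (by omega)
  have habs : (0 : ℝ) < ‖s0‖ := by
    simpa [norm_pos_iff] using hs0
  set ℓ : ℝ := lambda2 L / ‖s0‖ - M2 with hℓdef
  have hℓ : M1 * M2 ^ 2 < ℓ := by rw [hℓdef]; linarith
  have hℓpos : (0 : ℝ) < ℓ := lt_trans (by positivity) hℓ
  have hl2pos : (0 : ℝ) < lambda2 L := by
    have h1 : (0:ℝ) < lambda2 L / ‖s0‖ := by nlinarith
    rcases div_pos_iff.mp h1 with ⟨h, _⟩ | ⟨_, h⟩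
    · exact h
    · linarith
  -- matrices
  set Jm : Matrix (Fin (m + 2)) (Fin (m + 2)) ℂ := Matrix.vecMulVec 1 1 with hJm
  set Pm : Matrix (Fin (m + 2)) (Fin (m + 2)) ℂ := ((m + 2 : ℕ) : ℂ)⁻¹ • Jm with hPm
  set Qm : Matrix (Fin (m + 2)) (Fin (m + 2)) ℂ := 1 - Pm with hQm
  set Lc : Matrix (Fin (m + 2)) (Fin (m + 2)) ℂ := L.map Complex.ofReal with hLc
  set Ac : Matrix (Fin (m + 2)) (Fin (m + 2)) ℂ := s0⁻¹ • Lc with hAc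
  set Dm : Matrix (Fin (m + 2)) (Fin (m + 2)) ℂ := Matrix.diagonal γ with hDm
  set T : Matrix (Fin (m + 2)) (Fin (m + 2)) ℂ := Dm + Ac with hT
  set S : Matrix (Fin (m + 2)) (Fin (m + 2)) ℂ := Qm * Dm * Qm + Ac with hS
  set W : Matrix (Fin (m + 2)) (Fin (m + 2)) ℂ := S + Pm with hW
  -- basic identities
  have hJJ : Jm * Jm = ((m + 2 : ℕ) : ℂ) • Jm := by
    ext i j
    simp [hJm, Matrix.mul_apply, Matrix.vecMulVec_apply]
  have hPP : Pm * Pm = Pm := by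
    rw [hPm, Matrix.smul_mul, Matrix.mul_smul, hJJ, smul_smul, smul_smul]
    congr 1
    field_simp
  have hPQ : Pm * Qm = 0 := by rw [hQm, mul_sub, mul_one, hPP, sub_self]
  have hQP : Qm * Pm = 0 := by rw [hQm, sub_mul, one_mul, hPP, sub_self]
  have hQQ : Qm * Qm = Qm := by
    rw [hQm, sub_mul, one_mul, mul_sub, mul_one, hPP, sub_self, sub_zero]
  have hsumL : ∀ i, ∑ k, L i k = 0 := by
    intro i
    have := congrFun hL1 i
    simpa [Matrix.mulVec, dotProduct] using this
  have hsumL' : ∀ k, ∑ i, L i k = 0 := by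
    intro k
    rw [← hsumL k]
    exact Finset.sum_congr rfl fun i _ => congrFun (congrFun hsym k) i
  have hLJ : Lc * Jm = 0 := by
    ext i j
    simp only [hLc, hJm, Matrix.mul_apply, Matrix.vecMulVec_apply, Matrix.map_apply,
      Pi.one_apply, mul_one, Matrix.zero_apply]
    rw [← Complex.ofReal_sum]
    simp [hsumL i]
  have hJL : Jm * Lc = 0 := by
    ext i j
    simp only [hLc, hJm, Matrix.mul_apply, Matrix.vecMulVec_apply, Matrix.map_apply,
      Pi.one_apply, one_mul, Matrix.zero_apply]
    rw [← Complex.ofReal_sum]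
    simp [hsumL' j]
  have hAP : Ac * Pm = 0 := by
    rw [hAc, hPm, Matrix.smul_mul, Matrix.mul_smul, hLJ]
    simp
  have hPA : Pm * Ac = 0 := by
    rw [hAc, hPm, Matrix.smul_mul, Matrix.mul_smul, hJL]
    simp
  -- P M P = scalar • P
  have hPMP : ∀ M : Matrix (Fin (m + 2)) (Fin (m + 2)) ℂ,
      Pm * M * Pm = (((m + 2 : ℕ) : ℂ)⁻¹ * ((1 : Fin (m + 2) → ℂ) ⬝ᵥ (M *ᵥ 1))) • Pm := by
    intro M
    have hJMJ : Jm * M * Jm = ((1 : Fin (m + 2) → ℂ) ⬝ᵥ (M *ᵥ 1)) • Jm := by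
      ext i j
      simp only [hJm, Matrix.mul_apply, Matrix.vecMulVec_apply, Pi.one_apply, one_mul,
        mul_one, Matrix.smul_apply, dotProduct, Matrix.mulVec, smul_eq_mul]
      rw [Finset.sum_comm]
    rw [hPm, Matrix.smul_mul, Matrix.mul_smul, Matrix.smul_mul, hJMJ]
    rw [smul_smul, smul_smul, smul_smul]
    congr 1
    ring
  set a : ℂ := ((m + 2 : ℕ) : ℂ)⁻¹ * ∑ i, γ i with ha
  have hPDP : Pm * Dm * Pm = a • Pm := by
    rw [hPMP Dm, ha]
    congr 2
    simp [hDm, dotProduct, Matrix.mulVec_diagonal]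
  have hga : g * a = 1 := by
    rw [hgdef, ha]
    have h2 : ((m:ℂ) + 2) ≠ 0 := by push_cast at hn0; exact hn0
    field_simp
  -- vector-level facts
  have hPv : ∀ v : Fin (m + 2) → ℂ,
      Pm *ᵥ v = (((m + 2 : ℕ) : ℂ)⁻¹ * ∑ i, v i) • (1 : Fin (m + 2) → ℂ) := by
    intro v
    funext i
    simp [hPm, hJm, Matrix.mulVec, dotProduct, Matrix.vecMulVec_apply, Finset.mul_sum]
  have hPv0 : ∀ v : Fin (m + 2) → ℂ, Pm *ᵥ v = 0 → ∑ i, v i = 0 := by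
    intro v hv
    have := congrFun (hPv v ▸ hv) 0
    simp only [Pi.smul_apply, Pi.one_apply, smul_eq_mul, mul_one, Pi.zero_apply] at this
    rcases mul_eq_zero.mp this with h | h
    · exact absurd h (inv_ne_zero hn0)
    · exact h
  -- norms of P, Q, D
  have hPherm : Pmᴴ = Pm := by
    rw [hPm, Matrix.conjTranspose_smul]
    congr 1
    · simp
    · ext i j
      simp [hJm, Matrix.conjTranspose_apply, Matrix.vecMulVec_apply]
  have nP : ‖Pm‖ ≤ 1 := norm_le_one_of_herm_idem hPherm hPP
  have nQ : ‖Qm‖ ≤ 1 := by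
    refine norm_le_one_of_herm_idem ?_ hQQ
    rw [hQm, Matrix.conjTranspose_sub, hPherm, Matrix.conjTranspose_one]
  have nD : ‖Dm‖ ≤ M2 := by
    refine opnorm_le (le_of_lt hM2) fun x => ?_
    refine le_of_pow_le_pow_left₀ two_ne_zero (by positivity) ?_
    rw [mul_pow, normsq_eq, normsq_eq, Finset.mul_sum]
    refine Finset.sum_le_sum fun i _ => ?_
    rw [hDm, Matrix.mulVec_diagonal, norm_mul, mul_pow]
    have h1 : ‖γ i‖ ^ 2 ≤ M2 ^ 2 := by
      have := hγM i
      nlinarith [norm_nonneg (γ i)]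
    nlinarith [norm_nonneg (x i), sq_nonneg (‖x i‖)]
  -- coercivity of S on the mean-zero subspace
  have hSv : ∀ v : Fin (m + 2) → ℂ, ∑ i, v i = 0 →
      ℓ * ‖(WithLp.equiv 2 (Fin (m + 2) → ℂ)).symm v‖ ≤
        ‖(WithLp.equiv 2 (Fin (m + 2) → ℂ)).symm (S *ᵥ v)‖ := by
    intro v hv
    have hQv : Qm *ᵥ v = v := by
      rw [hQm, Matrix.sub_mulVec, Matrix.one_mulVec, hPv v, hv]
      simp
    have hSv' : S *ᵥ v = (s0⁻¹ • (Lc *ᵥ v)) + Qm *ᵥ (Dm *ᵥ v) := by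
      rw [hS, Matrix.add_mulVec, hAc, Matrix.smul_mulVec]
      rw [← Matrix.mulVec_mulVec, ← Matrix.mulVec_mulVec, hQv]
      ring_nf
    have hLcv : lambda2 L / ‖s0‖ *
        ‖(WithLp.equiv 2 (Fin (m + 2) → ℂ)).symm v‖ ≤
        ‖(WithLp.equiv 2 (Fin (m + 2) → ℂ)).symm (s0⁻¹ • (Lc *ᵥ v))‖ := by
      have h1 := lamC L hpsd (le_of_lt hl2pos) v hv
      have h2 : (WithLp.equiv 2 (Fin (m + 2) → ℂ)).symm (s0⁻¹ • (Lc *ᵥ v)) =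
          s0⁻¹ • (WithLp.equiv 2 (Fin (m + 2) → ℂ)).symm (Lc *ᵥ v) := rfl
      rw [h2, norm_smul]
      have h3 : ‖s0⁻¹‖ = (‖s0‖)⁻¹ := by
        simp
      have h4 : lambda2 L / ‖s0‖ *
          ‖(WithLp.equiv 2 (Fin (m + 2) → ℂ)).symm v‖ = (‖s0‖)⁻¹ *
          (lambda2 L * ‖(WithLp.equiv 2 (Fin (m + 2) → ℂ)).symm v‖) := by ring
      rw [h3, h4]
      exact mul_le_mul_of_nonneg_left h1 (by positivity)
    have hQDv : ‖(WithLp.equiv 2 (Fin (m + 2) → ℂ)).symm (Qm *ᵥ (Dm *ᵥ v))‖ ≤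
        M2 * ‖(WithLp.equiv 2 (Fin (m + 2) → ℂ)).symm v‖ := by
      calc ‖(WithLp.equiv 2 (Fin (m + 2) → ℂ)).symm (Qm *ᵥ (Dm *ᵥ v))‖
          ≤ ‖Qm‖ * ‖(WithLp.equiv 2 (Fin (m + 2) → ℂ)).symm (Dm *ᵥ v)‖ :=
            mulVec_norm_le Qm (Dm *ᵥ v)
        _ ≤ 1 * (‖Dm‖ * ‖(WithLp.equiv 2 (Fin (m + 2) → ℂ)).symm v‖) := by
            refine mul_le_mul nQ (mulVec_norm_le Dm v) (norm_nonneg _) zero_le_one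
        _ ≤ 1 * (M2 * ‖(WithLp.equiv 2 (Fin (m + 2) → ℂ)).symm v‖) := by
            refine mul_le_mul_of_nonneg_left ?_ zero_le_one
            exact mul_le_mul_of_nonneg_right nD (norm_nonneg _)
        _ = M2 * ‖(WithLp.equiv 2 (Fin (m + 2) → ℂ)).symm v‖ := one_mul _
    rw [hSv']
    have htri : ‖(WithLp.equiv 2 (Fin (m + 2) → ℂ)).symm (s0⁻¹ • (Lc *ᵥ v))‖ -
        ‖(WithLp.equiv 2 (Fin (m + 2) → ℂ)).symm (Qm *ᵥ (Dm *ᵥ v))‖ ≤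
        ‖(WithLp.equiv 2 (Fin (m + 2) → ℂ)).symm ((s0⁻¹ • (Lc *ᵥ v)) + Qm *ᵥ (Dm *ᵥ v))‖ := by
      have : (WithLp.equiv 2 (Fin (m + 2) → ℂ)).symm ((s0⁻¹ • (Lc *ᵥ v)) + Qm *ᵥ (Dm *ᵥ v)) =
          (WithLp.equiv 2 (Fin (m + 2) → ℂ)).symm (s0⁻¹ • (Lc *ᵥ v)) +
          (WithLp.equiv 2 (Fin (m + 2) → ℂ)).symm (Qm *ᵥ (Dm *ᵥ v)) := rfl
      rw [this]
      have h5 := norm_sub_norm_le ((WithLp.equiv 2 (Fin (m + 2) → ℂ)).symm (s0⁻¹ • (Lc *ᵥ v)))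
        (-((WithLp.equiv 2 (Fin (m + 2) → ℂ)).symm (Qm *ᵥ (Dm *ᵥ v))))
      simpa [sub_neg_eq_add] using h5
    calc ℓ * ‖(WithLp.equiv 2 (Fin (m + 2) → ℂ)).symm v‖
        = lambda2 L / ‖s0‖ * ‖(WithLp.equiv 2 (Fin (m + 2) → ℂ)).symm v‖ -
          M2 * ‖(WithLp.equiv 2 (Fin (m + 2) → ℂ)).symm v‖ := by rw [hℓdef]; ring
      _ ≤ ‖(WithLp.equiv 2 (Fin (m + 2) → ℂ)).symm (s0⁻¹ • (Lc *ᵥ v))‖ -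
          ‖(WithLp.equiv 2 (Fin (m + 2) → ℂ)).symm (Qm *ᵥ (Dm *ᵥ v))‖ := by
          linarith
      _ ≤ _ := htri
  -- W invertible
  have hPW : Pm * W = Pm := by
    rw [hW, hS, mul_add, mul_add, hPA, add_zero, hPP, ← mul_assoc, ← mul_assoc, hPQ,
      zero_mul, zero_mul, zero_add]
  have hWinj : ∀ v : Fin (m + 2) → ℂ, W *ᵥ v = 0 → v = 0 := by
    intro v hv
    have h1 : Pm *ᵥ v = 0 := by
      rw [← Matrix.one_mulVec v]  -- dummy
      rw [Matrix.one_mulVec v, ← hPW, ← Matrix.mulVec_mulVec, hv, Matrix.mulVec_zero]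
    have hsum := hPv0 v h1
    have h2 : S *ᵥ v = 0 := by
      have h3 : W *ᵥ v = S *ᵥ v + Pm *ᵥ v := by rw [hW, Matrix.add_mulVec]
      rw [hv, h1, add_zero] at h3
      exact h3.symm
    have h4 := hSv v hsum
    rw [h2] at h4
    rw [show ((WithLp.equiv 2 (Fin (m + 2) → ℂ)).symm (0 : Fin (m + 2) → ℂ)) = 0 from rfl,
      norm_zero] at h4
    have h5 : ‖(WithLp.equiv 2 (Fin (m + 2) → ℂ)).symm v‖ = 0 := by
      have := norm_nonneg ((WithLp.equiv 2 (Fin (m + 2) → ℂ)).symm v)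
      nlinarith
    have h6 : (WithLp.equiv 2 (Fin (m + 2) → ℂ)).symm v = 0 := norm_eq_zero.mp h5
    have := congrArg (WithLp.equiv 2 (Fin (m + 2) → ℂ)) h6
    simpa using this
  have hWunit : IsUnit W := isUnit_of_mulVec_injective hWinj
  have hWdet : IsUnit W.det := (Matrix.isUnit_iff_isUnit_det W).mp hWunit
  have hWl : W * W⁻¹ = 1 := Matrix.mul_nonsing_inv W hWdet
  have hWr : W⁻¹ * W = 1 := Matrix.nonsing_inv_mul W hWdet
  have hQA : Qm * Ac = Ac := by rw [hQm, sub_mul, one_mul, hPA, sub_zero]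
  have hAQ : Ac * Qm = Ac := by rw [hQm, mul_sub, mul_one, hAP, sub_zero]
  have hWQ : W * Qm = Qm * W := by
    rw [hW, hS]
    rw [add_mul, add_mul, mul_assoc, hQQ, hAQ, hPQ, add_zero]
    rw [mul_add, mul_add, ← mul_assoc, ← mul_assoc, hQQ, hQA, hQP, add_zero]
  have hWiQ : W⁻¹ * Qm = Qm * W⁻¹ := by
    calc W⁻¹ * Qm = W⁻¹ * Qm * (W * W⁻¹) := by rw [hWl, mul_one]
      _ = W⁻¹ * (Qm * W) * W⁻¹ := by rw [← mul_assoc, ← mul_assoc]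
      _ = W⁻¹ * (W * Qm) * W⁻¹ := by rw [hWQ]
      _ = (W⁻¹ * W) * (Qm * W⁻¹) := by rw [← mul_assoc, mul_assoc (W⁻¹ * W)]
      _ = Qm * W⁻¹ := by rw [hWr, one_mul]
  set K : Matrix (Fin (m + 2)) (Fin (m + 2)) ℂ := W⁻¹ * Qm with hK
  have hWK : W * K = Qm := by rw [hK, ← mul_assoc, hWl, one_mul]
  have hKP : K * Pm = 0 := by rw [hK, mul_assoc, hQP, mul_zero]
  have hPK : Pm * K = 0 := by rw [hWiQ, ← mul_assoc, hPQ, zero_mul]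
  -- norm of K
  have nK : ‖K‖ ≤ ℓ⁻¹ := by
    refine opnorm_le (by positivity) fun y => ?_
    set v : Fin (m + 2) → ℂ := K *ᵥ y with hv
    have h1 : Pm *ᵥ v = 0 := by
      rw [hv, Matrix.mulVec_mulVec, hPK, Matrix.zero_mulVec]
    have hsum := hPv0 v h1
    have h2 : S *ᵥ v = Qm *ᵥ y := by
      have h3 : W *ᵥ v = S *ᵥ v + Pm *ᵥ v := by rw [hW, Matrix.add_mulVec]
      rw [h1, add_zero] at h3
      rw [← h3, hv, Matrix.mulVec_mulVec, hWK]
    have h4 := hSv v hsum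
    rw [h2] at h4
    have h5 : ‖(WithLp.equiv 2 (Fin (m + 2) → ℂ)).symm (Qm *ᵥ y)‖ ≤
        ‖(WithLp.equiv 2 (Fin (m + 2) → ℂ)).symm y‖ := by
      calc ‖(WithLp.equiv 2 (Fin (m + 2) → ℂ)).symm (Qm *ᵥ y)‖ ≤
          ‖Qm‖ * ‖(WithLp.equiv 2 (Fin (m + 2) → ℂ)).symm y‖ := mulVec_norm_le Qm y
        _ ≤ 1 * ‖(WithLp.equiv 2 (Fin (m + 2) → ℂ)).symm y‖ :=
            mul_le_mul_of_nonneg_right nQ (norm_nonneg _)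
        _ = _ := one_mul _
    rw [inv_mul_eq_div, le_div_iff₀ hℓpos, mul_comm]
    exact le_trans h4 h5
  -- the scalars c, x, τ
  set c : ℂ := ((m + 2 : ℕ) : ℂ)⁻¹ * ((1 : Fin (m + 2) → ℂ) ⬝ᵥ ((Dm * K * Dm) *ᵥ 1)) with hc
  have hPDKDP : Pm * (Dm * K * Dm) * Pm = c • Pm := hPMP _
  have hone_norm : ‖(WithLp.equiv 2 (Fin (m + 2) → ℂ)).symm (1 : Fin (m + 2) → ℂ)‖ =
      Real.sqrt (m + 2) := by
    have h1 : ‖(WithLp.equiv 2 (Fin (m + 2) → ℂ)).symm (1 : Fin (m + 2) → ℂ)‖ ^ 2 =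
        ((m + 2 : ℕ) : ℝ) := by
      rw [normsq_eq]
      simp
    rw [← Real.sqrt_sq (norm_nonneg _), h1]
    norm_num
  have hdot : ∀ Mx : Matrix (Fin (m + 2)) (Fin (m + 2)) ℂ,
      ‖(1 : Fin (m + 2) → ℂ) ⬝ᵥ (Mx *ᵥ 1)‖ ≤ ((m + 2 : ℕ) : ℝ) * ‖Mx‖ := by
    intro Mx
    have hinner : (inner ℂ ((WithLp.equiv 2 (Fin (m + 2) → ℂ)).symm (1 : Fin (m + 2) → ℂ))
        ((WithLp.equiv 2 (Fin (m + 2) → ℂ)).symm (Mx *ᵥ 1)) : ℂ) =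
        (1 : Fin (m + 2) → ℂ) ⬝ᵥ (Mx *ᵥ 1) := by
      simp [PiLp.inner_apply, dotProduct, WithLp.equiv_symm_apply, PiLp.toLp_apply]
    rw [← hinner]
    calc ‖(inner ℂ ((WithLp.equiv 2 (Fin (m + 2) → ℂ)).symm (1 : Fin (m + 2) → ℂ))
        ((WithLp.equiv 2 (Fin (m + 2) → ℂ)).symm (Mx *ᵥ 1)) : ℂ)‖ ≤
        ‖(WithLp.equiv 2 (Fin (m + 2) → ℂ)).symm (1 : Fin (m + 2) → ℂ)‖ *
        ‖(WithLp.equiv 2 (Fin (m + 2) → ℂ)).symm (Mx *ᵥ 1)‖ := norm_inner_le_norm _ _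
      _ ≤ Real.sqrt (m + 2) * (‖Mx‖ * Real.sqrt (m + 2)) := by
          rw [hone_norm]
          refine mul_le_mul_of_nonneg_left ?_ (Real.sqrt_nonneg _)
          have := mulVec_norm_le Mx (1 : Fin (m + 2) → ℂ)
          rw [hone_norm] at this
          exact this
      _ = ((m + 2 : ℕ) : ℝ) * ‖Mx‖ := by
          rw [← mul_assoc, mul_comm (Real.sqrt _) ‖Mx‖, mul_assoc,
            Real.mul_self_sqrt (by positivity)]
          push_cast
          ring
  have nDKD : ‖Dm * K * Dm‖ ≤ M2 ^ 2 * ℓ⁻¹ := by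
    calc ‖Dm * K * Dm‖ ≤ ‖Dm * K‖ * ‖Dm‖ := Matrix.l2_opNorm_mul _ _
      _ ≤ (‖Dm‖ * ‖K‖) * ‖Dm‖ :=
          mul_le_mul_of_nonneg_right (Matrix.l2_opNorm_mul _ _) (norm_nonneg _)
      _ ≤ (M2 * ℓ⁻¹) * M2 := by
          have h1 : ‖Dm‖ * ‖K‖ ≤ M2 * ℓ⁻¹ :=
            mul_le_mul nD nK (norm_nonneg _) (le_of_lt hM2)
          exact mul_le_mul h1 nD (norm_nonneg _) (by positivity)
      _ = M2 ^ 2 * ℓ⁻¹ := by ring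
  have hcb : ‖c‖ ≤ M2 ^ 2 * ℓ⁻¹ := by
    rw [hc, norm_mul]
    have h1 : ‖(((m + 2 : ℕ) : ℂ))⁻¹‖ = (((m + 2 : ℕ) : ℝ))⁻¹ := by
      rw [norm_inv, RCLike.norm_natCast]
    rw [h1]
    calc (((m + 2 : ℕ) : ℝ))⁻¹ * ‖(1 : Fin (m + 2) → ℂ) ⬝ᵥ ((Dm * K * Dm) *ᵥ 1)‖ ≤
        (((m + 2 : ℕ) : ℝ))⁻¹ * (((m + 2 : ℕ) : ℝ) * ‖Dm * K * Dm‖) :=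
          mul_le_mul_of_nonneg_left (hdot _) (by positivity)
      _ = ‖Dm * K * Dm‖ := by
          rw [← mul_assoc, inv_mul_cancel₀ (by positivity), one_mul]
      _ ≤ M2 ^ 2 * ℓ⁻¹ := nDKD
  set x : ℂ := g * c with hx
  have hxb : ‖x‖ ≤ M1 * M2 ^ 2 / ℓ := by
    rw [hx, norm_mul]
    calc ‖g‖ * ‖c‖ ≤ M1 * (M2 ^ 2 * ℓ⁻¹) :=
        mul_le_mul hgM hcb (norm_nonneg _) (le_of_lt hM1)
      _ = M1 * M2 ^ 2 / ℓ := by ring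
  have hxlt : ‖x‖ < 1 := by
    refine lt_of_le_of_lt hxb ?_
    rw [div_lt_one hℓpos]
    exact hℓ
  have h1x : (1 : ℂ) - x ≠ 0 := by
    intro h
    have : (1 : ℂ) = x := by linear_combination h
    rw [← this] at hxlt
    simp at hxlt
  set τ : ℂ := g * (1 - x)⁻¹ with hτ
  have hgac : g * (a - c) = 1 - x := by rw [mul_sub, hga, hx]
  have hτac : τ * (a - c) = 1 := by
    rw [hτ, mul_comm g _, mul_assoc, hgac, inv_mul_cancel₀ h1x]
  -- product identities
  have hTP : T * Pm = Dm * Pm := by rw [hT, add_mul, hAP, add_zero]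
  have hTW : T = W + Pm * Dm + Dm * Pm - Pm * Dm * Pm - Pm := by
    rw [hT, hW, hS, hQm]
    noncomm_ring
  have hTK : T * K = Qm + Pm * (Dm * K) := by
    rw [hTW]
    simp only [sub_mul, add_mul, hWK, mul_assoc, hPK, mul_zero, add_zero, sub_zero]
  have hQDP' : Qm * (Dm * Pm) = Dm * Pm - a • Pm := by
    rw [hQm, sub_mul, one_mul, ← mul_assoc, hPDP]
  have hPDKDP' : (Pm * (Dm * K)) * (Dm * Pm) = c • Pm := by
    rw [show (Pm * (Dm * K)) * (Dm * Pm) = Pm * (Dm * K * Dm) * Pm by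
      simp only [mul_assoc], hPDKDP]
  have e2 : T * (Pm * (Dm * K)) = Dm * (Pm * (Dm * K)) := by
    rw [← mul_assoc, hTP, mul_assoc]
  have e3 : T * (K * (Dm * Pm)) = Dm * Pm - a • Pm + c • Pm := by
    rw [← mul_assoc, hTK, add_mul, hQDP', hPDKDP']
  have e5 : T * (K * (Dm * (Pm * (Dm * K)))) =
      Dm * (Pm * (Dm * K)) - a • (Pm * (Dm * K)) + c • (Pm * (Dm * K)) := by
    rw [← mul_assoc, hTK, add_mul]
    congr 1
    · rw [show Qm * (Dm * (Pm * (Dm * K))) = (Qm * (Dm * Pm)) * (Dm * K) by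
        simp only [mul_assoc], hQDP', sub_mul, smul_mul_assoc, mul_assoc]
    · rw [show (Pm * (Dm * K)) * (Dm * (Pm * (Dm * K))) =
        ((Pm * (Dm * K)) * (Dm * Pm)) * (Dm * K) by simp only [mul_assoc], hPDKDP',
        smul_mul_assoc]
  set R : Matrix (Fin (m + 2)) (Fin (m + 2)) ℂ :=
    τ • Pm - τ • (Pm * (Dm * K)) - τ • (K * (Dm * Pm)) + K +
      τ • (K * (Dm * (Pm * (Dm * K)))) with hR
  have hTR : T * R = 1 := by
    have expand : T * R = τ • (Dm * Pm) - τ • (Dm * (Pm * (Dm * K))) -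
        τ • (Dm * Pm - a • Pm + c • Pm) + (Qm + Pm * (Dm * K)) +
        τ • (Dm * (Pm * (Dm * K)) - a • (Pm * (Dm * K)) + c • (Pm * (Dm * K))) := by
      rw [hR, mul_add, mul_add, mul_sub, mul_sub,
        mul_smul_comm τ T Pm, mul_smul_comm τ T (Pm * (Dm * K)),
        mul_smul_comm τ T (K * (Dm * Pm)),
        mul_smul_comm τ T (K * (Dm * (Pm * (Dm * K)))), hTP, e2, e3, hTK, e5]
    rw [expand]
    have combine : τ • (Dm * Pm) - τ • (Dm * (Pm * (Dm * K))) -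
        τ • (Dm * Pm - a • Pm + c • Pm) + (Qm + Pm * (Dm * K)) +
        τ • (Dm * (Pm * (Dm * K)) - a • (Pm * (Dm * K)) + c • (Pm * (Dm * K))) =
        Qm + (τ * (a - c)) • Pm + ((1 : ℂ) - τ * (a - c)) • (Pm * (Dm * K)) := by
      module
    rw [combine, hτac, one_smul, sub_self, zero_smul, add_zero, hQm]
    exact sub_add_cancel 1 Pm
  have hRT : R * T = 1 := mul_eq_one_comm.mp hTR
  have hTunit : IsUnit T := ⟨⟨T, R, hTR, hRT⟩, rfl⟩
  have hTinv : T⁻¹ = R := Matrix.inv_eq_right_inv hTR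
  refine ⟨hTunit, ?_⟩
  rw [hTinv]
  have hgP : (((m + 2 : ℕ) : ℂ))⁻¹ • g • Jm = g • Pm := by
    rw [hPm]
    exact smul_comm _ _ _
  rw [hgP]
  have hE : R - g • Pm = (τ - g) • Pm - τ • (Pm * (Dm * K)) - τ • (K * (Dm * Pm)) + K +
      τ • (K * (Dm * (Pm * (Dm * K)))) := by
    rw [hR]
    module
  rw [hE]
  set e : ℝ := ℓ - M1 * M2 ^ 2 with he
  have hepos : (0 : ℝ) < e := by rw [he]; linarith
  have hinv : ‖(1 - x)⁻¹‖ ≤ ℓ / e := by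
    rw [norm_inv]
    have h1 : e / ℓ ≤ ‖1 - x‖ := by
      have h2 : (1 : ℝ) - ‖x‖ ≤ ‖(1 : ℂ) - x‖ := by
        have := norm_sub_norm_le (1 : ℂ) x
        simpa using this
      have h3 : e / ℓ ≤ 1 - ‖x‖ := by
        rw [he, sub_div, div_self (ne_of_gt hℓpos)]
        have : M1 * M2 ^ 2 / ℓ ≥ ‖x‖ := hxb
        linarith
      linarith
    have h4 : (0 : ℝ) < e / ℓ := by positivity
    calc ‖(1 : ℂ) - x‖⁻¹ ≤ (e / ℓ)⁻¹ := by
          exact inv_anti₀ h4 h1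
      _ = ℓ / e := by rw [inv_div]
  have hτn : ‖τ‖ ≤ M1 * ℓ / e := by
    rw [hτ, norm_mul]
    calc ‖g‖ * ‖(1 - x)⁻¹‖ ≤ M1 * (ℓ / e) :=
        mul_le_mul hgM hinv (norm_nonneg _) (le_of_lt hM1)
      _ = M1 * ℓ / e := by ring
  have hτg_eq : τ - g = g * x * (1 - x)⁻¹ := by
    rw [hτ]
    field_simp
    ring
  have hτg : ‖τ - g‖ ≤ M1 ^ 2 * M2 ^ 2 / e := by
    rw [hτg_eq, norm_mul, norm_mul]
    calc ‖g‖ * ‖x‖ * ‖(1 - x)⁻¹‖ ≤ M1 * (M1 * M2 ^ 2 / ℓ) * (ℓ / e) :=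
        mul_le_mul (mul_le_mul hgM hxb (norm_nonneg _) (le_of_lt hM1)) hinv
          (norm_nonneg _) (by positivity)
      _ = M1 ^ 2 * M2 ^ 2 / e * (ℓ / ℓ) := by ring
      _ = M1 ^ 2 * M2 ^ 2 / e := by rw [div_self (ne_of_gt hℓpos), mul_one]
  -- bounds on the five pieces
  have bPDK : ‖Pm * (Dm * K)‖ ≤ M2 / ℓ := by
    calc ‖Pm * (Dm * K)‖ ≤ ‖Pm‖ * ‖Dm * K‖ := Matrix.l2_opNorm_mul _ _
      _ ≤ 1 * (‖Dm‖ * ‖K‖) := mul_le_mul nP (Matrix.l2_opNorm_mul _ _) (norm_nonneg _)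
          zero_le_one
      _ ≤ 1 * (M2 * ℓ⁻¹) := by
          refine mul_le_mul_of_nonneg_left ?_ zero_le_one
          exact mul_le_mul nD nK (norm_nonneg _) (le_of_lt hM2)
      _ = M2 / ℓ := by rw [one_mul, div_eq_mul_inv]
  have bKDP : ‖K * (Dm * Pm)‖ ≤ M2 / ℓ := by
    calc ‖K * (Dm * Pm)‖ ≤ ‖K‖ * ‖Dm * Pm‖ := Matrix.l2_opNorm_mul _ _
      _ ≤ ℓ⁻¹ * (‖Dm‖ * ‖Pm‖) := mul_le_mul nK (Matrix.l2_opNorm_mul _ _) (norm_nonneg _)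
          (by positivity)
      _ ≤ ℓ⁻¹ * (M2 * 1) := by
          refine mul_le_mul_of_nonneg_left ?_ (by positivity)
          exact mul_le_mul nD nP (norm_nonneg _) (le_of_lt hM2)
      _ = M2 / ℓ := by rw [mul_one, div_eq_mul_inv, mul_comm]
  have bKDPDK : ‖K * (Dm * (Pm * (Dm * K)))‖ ≤ M2 ^ 2 / ℓ ^ 2 := by
    calc ‖K * (Dm * (Pm * (Dm * K)))‖ ≤ ‖K‖ * ‖Dm * (Pm * (Dm * K))‖ :=
        Matrix.l2_opNorm_mul _ _
      _ ≤ ℓ⁻¹ * (‖Dm‖ * ‖Pm * (Dm * K)‖) := mul_le_mul nK (Matrix.l2_opNorm_mul _ _)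
          (norm_nonneg _) (by positivity)
      _ ≤ ℓ⁻¹ * (M2 * (M2 / ℓ)) := by
          refine mul_le_mul_of_nonneg_left ?_ (by positivity)
          exact mul_le_mul nD bPDK (norm_nonneg _) (le_of_lt hM2)
      _ = M2 ^ 2 / ℓ ^ 2 := by field_simp
  -- triangle inequality
  have tri : ‖(τ - g) • Pm - τ • (Pm * (Dm * K)) - τ • (K * (Dm * Pm)) + K +
      τ • (K * (Dm * (Pm * (Dm * K))))‖ ≤
      ‖τ - g‖ * ‖Pm‖ + ‖τ‖ * ‖Pm * (Dm * K)‖ + ‖τ‖ * ‖K * (Dm * Pm)‖ + ‖K‖ +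
      ‖τ‖ * ‖K * (Dm * (Pm * (Dm * K)))‖ := by
    calc ‖(τ - g) • Pm - τ • (Pm * (Dm * K)) - τ • (K * (Dm * Pm)) + K +
        τ • (K * (Dm * (Pm * (Dm * K))))‖ ≤
        ‖(τ - g) • Pm - τ • (Pm * (Dm * K)) - τ • (K * (Dm * Pm)) + K‖ +
        ‖τ • (K * (Dm * (Pm * (Dm * K))))‖ := norm_add_le _ _
      _ ≤ (‖(τ - g) • Pm - τ • (Pm * (Dm * K)) - τ • (K * (Dm * Pm))‖ + ‖K‖) +
        ‖τ • (K * (Dm * (Pm * (Dm * K))))‖ := by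
          gcongr
          exact norm_add_le _ _
      _ ≤ ((‖(τ - g) • Pm - τ • (Pm * (Dm * K))‖ + ‖τ • (K * (Dm * Pm))‖) + ‖K‖) +
        ‖τ • (K * (Dm * (Pm * (Dm * K))))‖ := by
          gcongr
          exact norm_sub_le _ _
      _ ≤ (((‖(τ - g) • Pm‖ + ‖τ • (Pm * (Dm * K))‖) + ‖τ • (K * (Dm * Pm))‖) + ‖K‖) +
        ‖τ • (K * (Dm * (Pm * (Dm * K))))‖ := by
          gcongr
          exact norm_sub_le _ _
      _ = ‖τ - g‖ * ‖Pm‖ + ‖τ‖ * ‖Pm * (Dm * K)‖ + ‖τ‖ * ‖K * (Dm * Pm)‖ + ‖K‖ +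
        ‖τ‖ * ‖K * (Dm * (Pm * (Dm * K)))‖ := by
          rw [norm_smul (τ - g) Pm, norm_smul τ (Pm * (Dm * K)),
            norm_smul τ (K * (Dm * Pm)), norm_smul τ (K * (Dm * (Pm * (Dm * K))))]
  have hτnn : (0 : ℝ) ≤ ‖τ‖ := norm_nonneg _
  have total : ‖τ - g‖ * ‖Pm‖ + ‖τ‖ * ‖Pm * (Dm * K)‖ + ‖τ‖ * ‖K * (Dm * Pm)‖ + ‖K‖ +
      ‖τ‖ * ‖K * (Dm * (Pm * (Dm * K)))‖ ≤
      M1 ^ 2 * M2 ^ 2 / e + (M1 * ℓ / e) * (M2 / ℓ) + (M1 * ℓ / e) * (M2 / ℓ) + ℓ⁻¹ +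
      (M1 * ℓ / e) * (M2 ^ 2 / ℓ ^ 2) := by
    have t1 : ‖τ - g‖ * ‖Pm‖ ≤ M1 ^ 2 * M2 ^ 2 / e := by
      calc ‖τ - g‖ * ‖Pm‖ ≤ (M1 ^ 2 * M2 ^ 2 / e) * 1 :=
          mul_le_mul hτg nP (norm_nonneg _) (by positivity)
        _ = M1 ^ 2 * M2 ^ 2 / e := mul_one _
    have t2 : ‖τ‖ * ‖Pm * (Dm * K)‖ ≤ (M1 * ℓ / e) * (M2 / ℓ) :=
      mul_le_mul hτn bPDK (norm_nonneg _) (by positivity)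
    have t3 : ‖τ‖ * ‖K * (Dm * Pm)‖ ≤ (M1 * ℓ / e) * (M2 / ℓ) :=
      mul_le_mul hτn bKDP (norm_nonneg _) (by positivity)
    have t5 : ‖τ‖ * ‖K * (Dm * (Pm * (Dm * K)))‖ ≤ (M1 * ℓ / e) * (M2 ^ 2 / ℓ ^ 2) :=
      mul_le_mul hτn bKDPDK (norm_nonneg _) (by positivity)
    linarith [nK]
  have final_eq : M1 ^ 2 * M2 ^ 2 / e + (M1 * ℓ / e) * (M2 / ℓ) + (M1 * ℓ / e) * (M2 / ℓ) +
      ℓ⁻¹ + (M1 * ℓ / e) * (M2 ^ 2 / ℓ ^ 2) =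
      (M1 ^ 2 * M2 ^ 2 + 2 * M1 * M2 + M1 * M2 ^ 2 / ℓ) / e + 1 / ℓ := by
    field_simp
    ring
  have hfin := le_trans tri (le_trans total (le_of_eq final_eq))
  calc ‖(τ - g) • Pm - τ • (Pm * (Dm * K)) - τ • (K * (Dm * Pm)) + K +
      τ • (K * (Dm * (Pm * (Dm * K))))‖ ≤
      (M1 ^ 2 * M2 ^ 2 + 2 * M1 * M2 + M1 * M2 ^ 2 / ℓ) / e + 1 / ℓ := hfin
    _ = (M1 ^ 2 * M2 ^ 2 + 2 * M1 * M2 +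
          M1 * M2 ^ 2 / (lambda2 L / ‖s0‖ - M2)) /
        (lambda2 L / ‖s0‖ - M2 - M1 * M2 ^ 2) +
        1 / (lambda2 L / ‖s0‖ - M2) := by rw [he, hℓdef]
end

section
/- Let n ≥ 2, let M1, M2 > 0 and ℓ > M2 + M1·M2². Let ḡ ∈ ℂ with ḡ ≠ 0 and |ḡ| ≤ M1, let h ∈ ℂ^{n−1} with Euclidean norm ‖h‖ ≤ M2, and let H22 be an invertible (n−1)×(n−1) complex matrix with ‖H22^{-1}‖ ≤ 1/(ℓ − M2). Then the block matrix H = [[ḡ^{-1}, hᵀ],[h, H22]] is invertible and ‖H^{-1} − ḡ·e1 e1ᵀ‖ ≤ (M1²M2² + 2M1M2 + M1M2²/(ℓ − M2)) / (ℓ − M2 − M1M2²) + 1/(ℓ − M2), where e1 ∈ ℝ^n is the first standard basis vector, ‖·‖ denotes the spectral norm, and hᵀ is the transpose (without conjugation) of h. -/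
open Matrix LinearMap
open scoped Matrix.Norms.L2Operator
set_option linter.unusedSectionVars false

section Helpers
variable {ι κ ι' κ' : Type*} [Fintype ι] [Fintype κ] [Fintype ι'] [Fintype κ']
  [DecidableEq ι] [DecidableEq κ] [DecidableEq ι'] [DecidableEq κ']

private lemma clm_apply (M : Matrix ι κ ℂ) (x : EuclideanSpace ℂ κ) :
    ((Matrix.toEuclideanLin (𝕜 := ℂ) (m := ι) (n := κ)).trans toContinuousLinearMap M) x =
      (WithLp.equiv 2 (ι → ℂ)).symm (M *ᵥ (WithLp.equiv 2 (κ → ℂ)) x) := rfl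

private lemma euclid_norm (u : ι → ℂ) :
    ‖(WithLp.equiv 2 (ι → ℂ)).symm u‖ = Real.sqrt (∑ i, ‖u i‖ ^ 2) := by
  rw [EuclideanSpace.norm_eq]; simp

private lemma mulVec_norm_le_s10 (M : Matrix ι κ ℂ) (u : κ → ℂ) :
    Real.sqrt (∑ i, ‖(M *ᵥ u) i‖ ^ 2) ≤ ‖M‖ * Real.sqrt (∑ j, ‖u j‖ ^ 2) := by
  have := M.l2_opNorm_mulVec ((WithLp.equiv 2 (κ → ℂ)).symm u)
  simpa [euclid_norm, EuclideanSpace.norm_eq] using this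

private lemma opNorm_le_of_mulVec (M : Matrix ι κ ℂ) {c : ℝ} (hc : 0 ≤ c)
    (hM : ∀ u : κ → ℂ, Real.sqrt (∑ i, ‖(M *ᵥ u) i‖ ^ 2) ≤ c * Real.sqrt (∑ j, ‖u j‖ ^ 2)) :
    ‖M‖ ≤ c := by
  rw [Matrix.l2_opNorm_def]
  refine ContinuousLinearMap.opNorm_le_bound _ hc fun x => ?_
  rw [clm_apply, euclid_norm]
  calc _ ≤ c * Real.sqrt (∑ j, ‖(WithLp.equiv 2 (κ → ℂ)) x j‖ ^ 2) := hM _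
    _ = c * ‖x‖ := by rw [EuclideanSpace.norm_eq]; rfl

private lemma sum_split (u : ι ⊕ κ → ℝ) : ∑ i, u i = (∑ i, u (Sum.inl i)) + ∑ j, u (Sum.inr j) :=
  Fintype.sum_sum_type u

private lemma corner11 (A : Matrix ι κ ℂ) :
    ‖(fromBlocks A 0 0 0 : Matrix (ι ⊕ ι') (κ ⊕ κ') ℂ)‖ ≤ ‖A‖ := by
  refine opNorm_le_of_mulVec _ (norm_nonneg A) fun u => ?_
  have hu : u = Sum.elim (u ∘ Sum.inl) (u ∘ Sum.inr) := (Sum.elim_comp_inl_inr u).symm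
  rw [hu, fromBlocks_mulVec]
  rw [sum_split, sum_split (fun j => ‖Sum.elim (u ∘ Sum.inl) (u ∘ Sum.inr) j‖ ^ 2)]
  simp only [Sum.elim_inl, Sum.elim_inr, Matrix.zero_mulVec, add_zero, zero_add,
    Function.comp_apply, Pi.zero_apply, norm_zero, zero_pow, Finset.sum_const_zero,
    OfNat.ofNat_ne_zero, ne_eq, not_false_iff]
  calc Real.sqrt (∑ i, ‖(A *ᵥ (u ∘ Sum.inl)) i‖ ^ 2)
      ≤ ‖A‖ * Real.sqrt (∑ j, ‖u (Sum.inl j)‖ ^ 2) := mulVec_norm_le_s10 _ _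
    _ ≤ ‖A‖ * Real.sqrt ((∑ j, ‖u (Sum.inl j)‖ ^ 2) + ∑ j, ‖u (Sum.inr j)‖ ^ 2) := by
        exact mul_le_mul_of_nonneg_left
          (Real.sqrt_le_sqrt (le_add_of_nonneg_right (by positivity))) (norm_nonneg A)

private lemma corner12 (B : Matrix ι κ' ℂ) :
    ‖(fromBlocks 0 B 0 0 : Matrix (ι ⊕ ι') (κ ⊕ κ') ℂ)‖ ≤ ‖B‖ := by
  refine opNorm_le_of_mulVec _ (norm_nonneg B) fun u => ?_
  have hu : u = Sum.elim (u ∘ Sum.inl) (u ∘ Sum.inr) := (Sum.elim_comp_inl_inr u).symm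
  rw [hu, fromBlocks_mulVec]
  rw [sum_split, sum_split (fun j => ‖Sum.elim (u ∘ Sum.inl) (u ∘ Sum.inr) j‖ ^ 2)]
  simp only [Sum.elim_inl, Sum.elim_inr, Matrix.zero_mulVec, add_zero, zero_add,
    Function.comp_apply, Pi.zero_apply, norm_zero, zero_pow, Finset.sum_const_zero,
    OfNat.ofNat_ne_zero, ne_eq, not_false_iff]
  calc Real.sqrt (∑ i, ‖(B *ᵥ (u ∘ Sum.inr)) i‖ ^ 2)
      ≤ ‖B‖ * Real.sqrt (∑ j, ‖u (Sum.inr j)‖ ^ 2) := mulVec_norm_le_s10 _ _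
    _ ≤ ‖B‖ * Real.sqrt ((∑ j, ‖u (Sum.inl j)‖ ^ 2) + ∑ j, ‖u (Sum.inr j)‖ ^ 2) :=
        mul_le_mul_of_nonneg_left
          (Real.sqrt_le_sqrt (le_add_of_nonneg_left (by positivity))) (norm_nonneg B)

private lemma corner21 (C : Matrix ι' κ ℂ) :
    ‖(fromBlocks 0 0 C 0 : Matrix (ι ⊕ ι') (κ ⊕ κ') ℂ)‖ ≤ ‖C‖ := by
  refine opNorm_le_of_mulVec _ (norm_nonneg C) fun u => ?_
  have hu : u = Sum.elim (u ∘ Sum.inl) (u ∘ Sum.inr) := (Sum.elim_comp_inl_inr u).symm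
  rw [hu, fromBlocks_mulVec]
  rw [sum_split, sum_split (fun j => ‖Sum.elim (u ∘ Sum.inl) (u ∘ Sum.inr) j‖ ^ 2)]
  simp only [Sum.elim_inl, Sum.elim_inr, Matrix.zero_mulVec, add_zero, zero_add,
    Function.comp_apply, Pi.zero_apply, norm_zero, zero_pow, Finset.sum_const_zero,
    OfNat.ofNat_ne_zero, ne_eq, not_false_iff]
  calc Real.sqrt (∑ i, ‖(C *ᵥ (u ∘ Sum.inl)) i‖ ^ 2)
      ≤ ‖C‖ * Real.sqrt (∑ j, ‖u (Sum.inl j)‖ ^ 2) := mulVec_norm_le_s10 _ _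
    _ ≤ ‖C‖ * Real.sqrt ((∑ j, ‖u (Sum.inl j)‖ ^ 2) + ∑ j, ‖u (Sum.inr j)‖ ^ 2) :=
        mul_le_mul_of_nonneg_left
          (Real.sqrt_le_sqrt (le_add_of_nonneg_right (by positivity))) (norm_nonneg C)

private lemma corner22 (D : Matrix ι' κ' ℂ) :
    ‖(fromBlocks 0 0 0 D : Matrix (ι ⊕ ι') (κ ⊕ κ') ℂ)‖ ≤ ‖D‖ := by
  refine opNorm_le_of_mulVec _ (norm_nonneg D) fun u => ?_
  have hu : u = Sum.elim (u ∘ Sum.inl) (u ∘ Sum.inr) := (Sum.elim_comp_inl_inr u).symm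
  rw [hu, fromBlocks_mulVec]
  rw [sum_split, sum_split (fun j => ‖Sum.elim (u ∘ Sum.inl) (u ∘ Sum.inr) j‖ ^ 2)]
  simp only [Sum.elim_inl, Sum.elim_inr, Matrix.zero_mulVec, add_zero, zero_add,
    Function.comp_apply, Pi.zero_apply, norm_zero, zero_pow, Finset.sum_const_zero,
    OfNat.ofNat_ne_zero, ne_eq, not_false_iff]
  calc Real.sqrt (∑ i, ‖(D *ᵥ (u ∘ Sum.inr)) i‖ ^ 2)
      ≤ ‖D‖ * Real.sqrt (∑ j, ‖u (Sum.inr j)‖ ^ 2) := mulVec_norm_le_s10 _ _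
    _ ≤ ‖D‖ * Real.sqrt ((∑ j, ‖u (Sum.inl j)‖ ^ 2) + ∑ j, ‖u (Sum.inr j)‖ ^ 2) :=
        mul_le_mul_of_nonneg_left
          (Real.sqrt_le_sqrt (le_add_of_nonneg_left (by positivity))) (norm_nonneg D)

private lemma fromBlocks_norm_le (A : Matrix ι κ ℂ) (B : Matrix ι κ' ℂ) (C : Matrix ι' κ ℂ)
    (D : Matrix ι' κ' ℂ) :
    ‖fromBlocks A B C D‖ ≤ ‖A‖ + ‖B‖ + ‖C‖ + ‖D‖ := by
  have hd : fromBlocks A B C D =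
      fromBlocks A 0 0 0 + fromBlocks 0 B 0 0 + fromBlocks 0 0 C 0 + fromBlocks 0 0 0 D := by
    simp [Matrix.fromBlocks_add]
  rw [hd]
  calc ‖_ + _ + _ + _‖ ≤ ‖(fromBlocks A 0 0 0 : Matrix (ι ⊕ ι') (κ ⊕ κ') ℂ)‖ +
        ‖(fromBlocks 0 B 0 0 : Matrix (ι ⊕ ι') (κ ⊕ κ') ℂ)‖ +
        ‖(fromBlocks 0 0 C 0 : Matrix (ι ⊕ ι') (κ ⊕ κ') ℂ)‖ +
        ‖(fromBlocks 0 0 0 D : Matrix (ι ⊕ ι') (κ ⊕ κ') ℂ)‖ := by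
          exact le_trans (norm_add_le _ _) (add_le_add_left (le_trans (norm_add_le _ _)
            (add_le_add_left (norm_add_le _ _) _)) _)
    _ ≤ ‖A‖ + ‖B‖ + ‖C‖ + ‖D‖ := by
        gcongr
        exacts [corner11 A, corner12 B, corner21 C, corner22 D]

private lemma norm_col_le (v : ι → ℂ) :
    ‖(Matrix.of fun i (_ : Unit) => v i : Matrix ι Unit ℂ)‖ ≤ Real.sqrt (∑ i, ‖v i‖ ^ 2) := by
  refine opNorm_le_of_mulVec _ (Real.sqrt_nonneg _) fun u => ?_
  have hmv : ∀ i, ((Matrix.of fun i (_ : Unit) => v i : Matrix ι Unit ℂ) *ᵥ u) i = v i * u () := by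
    intro i; simp [Matrix.mulVec, dotProduct]
  simp only [hmv, norm_mul, mul_pow, ← Finset.sum_mul]
  rw [Real.sqrt_mul (by positivity)]
  have h2 : (‖u ()‖ ^ 2) ≤ ∑ j : Unit, ‖u j‖ ^ 2 := by simp
  exact mul_le_mul_of_nonneg_left (Real.sqrt_le_sqrt h2) (Real.sqrt_nonneg _)

private lemma norm_row_le (v : ι → ℂ) :
    ‖(Matrix.of fun (_ : Unit) j => v j : Matrix Unit ι ℂ)‖ ≤ Real.sqrt (∑ i, ‖v i‖ ^ 2) := by
  have heq : (Matrix.of fun (_ : Unit) j => v j : Matrix Unit ι ℂ) =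
      (Matrix.of fun i (_ : Unit) => (starRingEnd ℂ) (v i) : Matrix ι Unit ℂ)ᴴ := by
    ext i j; simp [Matrix.conjTranspose_apply]
  rw [heq, Matrix.l2_opNorm_conjTranspose]
  refine le_trans (norm_col_le _) (le_of_eq ?_)
  congr 1
  exact Finset.sum_congr rfl fun i _ => by rw [RCLike.norm_conj]

private lemma norm_unit_matrix (M : Matrix Unit Unit ℂ) : ‖M‖ = ‖M () ()‖ := by
  refine le_antisymm ?_ ?_
  · refine opNorm_le_of_mulVec _ (norm_nonneg _) fun u => ?_
    have hmv : ∀ i, (M *ᵥ u) i = M () () * u () := by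
      intro i; simp [Matrix.mulVec, dotProduct]
    simp only [hmv]
    rw [show ∑ x : Unit, ‖M () () * u ()‖ ^ 2 = ‖M () () * u ()‖ ^ 2 by simp,
      show ∑ j : Unit, ‖u j‖ ^ 2 = ‖u ()‖ ^ 2 by simp,
      Real.sqrt_sq (norm_nonneg _), Real.sqrt_sq (norm_nonneg _), norm_mul]
  · have hb := M.l2_opNorm_mulVec ((WithLp.equiv 2 (Unit → ℂ)).symm (fun _ => 1))
    have h1 : ‖((WithLp.equiv 2 (Unit → ℂ)).symm (fun _ => (1:ℂ)))‖ = 1 := by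
      rw [euclid_norm]; simp
    rw [h1, mul_one] at hb
    refine le_trans (le_of_eq ?_) hb
    rw [show ((EuclideanSpace.equiv Unit ℂ).symm
        (M *ᵥ (WithLp.equiv 2 (Unit → ℂ)).symm fun _ => (1:ℂ))) =
        (WithLp.equiv 2 (Unit → ℂ)).symm (M *ᵥ fun _ => (1:ℂ)) from rfl, euclid_norm]
    rw [show ∑ i : Unit, ‖(M *ᵥ fun _ => (1:ℂ)) i‖ ^ 2 = ‖(M *ᵥ fun _ => (1:ℂ)) ()‖ ^ 2 by simp,
      Real.sqrt_sq (norm_nonneg _)]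
    simp [Matrix.mulVec, dotProduct]

end Helpers

/-- The combined estimate of Lemma 2: for the `n×n` (`n = m+2 ≥ 2`)
block matrix `H = [[ḡ⁻¹, hᵀ], [h, H22]]` with `|ḡ| ≤ M1`, `‖h‖ ≤ M2` (Euclidean norm),
`‖H22⁻¹‖ ≤ 1/(ℓ - M2)` and `ℓ > M2 + M1 M2²`, `H` is invertible and
`‖H⁻¹ - ḡ e₁e₁ᵀ‖` obeys the stated bound (spectral norm). The `n` indices are
`Unit ⊕ Fin (m+1)`, the `Unit` index being the first coordinate. -/
theorem stmt_10 {m : ℕ} (M1 M2 ℓ : ℝ) (hM1 : 0 < M1) (hM2 : 0 < M2)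
    (hℓ : M2 + M1 * M2 ^ 2 < ℓ)
    (g : ℂ) (hg : g ≠ 0) (hgM : ‖g‖ ≤ M1)
    (h : Fin (m + 1) → ℂ) (hh : Real.sqrt (∑ i, ‖h i‖ ^ 2) ≤ M2)
    (H22 : Matrix (Fin (m + 1)) (Fin (m + 1)) ℂ) (hH22 : IsUnit H22)
    (hH22inv : ‖H22⁻¹‖ ≤ 1 / (ℓ - M2))
    (H : Matrix (Unit ⊕ Fin (m + 1)) (Unit ⊕ Fin (m + 1)) ℂ)
    (hH : H = Matrix.fromBlocks (Matrix.of fun _ _ => g⁻¹) (Matrix.of fun _ j => h j)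
        (Matrix.of fun i _ => h i) H22) :
    IsUnit H ∧
      ‖H⁻¹ - g • Matrix.fromBlocks 1 0 0 0‖ ≤
        (M1 ^ 2 * M2 ^ 2 + 2 * M1 * M2 + M1 * M2 ^ 2 / (ℓ - M2)) /
            (ℓ - M2 - M1 * M2 ^ 2) +
          1 / (ℓ - M2) := by
  subst hH
  have ha : 0 < ℓ - M2 := by nlinarith
  have hδ : 0 < ℓ - M2 - M1 * M2 ^ 2 := by nlinarith
  set a : ℝ := ℓ - M2 with ha_def
  set δ : ℝ := ℓ - M2 - M1 * M2 ^ 2 with hδ_def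
  set r : Matrix Unit (Fin (m + 1)) ℂ := Matrix.of fun _ j => h j with hr_def
  set c : Matrix (Fin (m + 1)) Unit ℂ := Matrix.of fun i _ => h i with hc_def
  set Di : Matrix (Fin (m + 1)) (Fin (m + 1)) ℂ := H22⁻¹ with hDi_def
  have hdet : IsUnit H22.det := (Matrix.isUnit_iff_isUnit_det H22).mp hH22
  have hDDi : H22 * Di = 1 := Matrix.mul_nonsing_inv H22 hdet
  have hDiD : Di * H22 = 1 := Matrix.nonsing_inv_mul H22 hdet
  set z : ℂ := (r * Di * c) () () with hz_def
  set s : ℂ := g⁻¹ - z with hs_def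
  -- norm facts
  have hrn : ‖r‖ ≤ M2 := le_trans (norm_row_le h) hh
  have hcn : ‖c‖ ≤ M2 := le_trans (norm_col_le h) hh
  have hDin : ‖Di‖ ≤ 1 / a := hH22inv
  have hzn : ‖z‖ ≤ M2 * ((1 / a) * M2) := by
    have h1 : ‖r * Di * c‖ ≤ ‖r‖ * ‖Di‖ * ‖c‖ :=
      le_trans (Matrix.l2_opNorm_mul _ _)
        (mul_le_mul_of_nonneg_right (Matrix.l2_opNorm_mul r Di) (norm_nonneg c))
    have h2 : ‖z‖ = ‖r * Di * c‖ := (norm_unit_matrix _).symm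
    rw [h2]
    refine le_trans h1 ?_
    calc ‖r‖ * ‖Di‖ * ‖c‖ ≤ M2 * (1 / a) * M2 :=
          mul_le_mul (mul_le_mul hrn hDin (norm_nonneg _) hM2.le) hcn (norm_nonneg _)
            (by positivity)
      _ = M2 * ((1 / a) * M2) := by ring
  have hginv : 1 / M1 ≤ ‖g⁻¹‖ := by
    rw [norm_inv, ← one_div]
    exact one_div_le_one_div_of_le (norm_pos_iff.mpr hg) hgM
  have hab : δ / (M1 * a) = 1 / M1 - M2 * ((1 / a) * M2) := by
    field_simp
    ring
  have hs_lb : δ / (M1 * a) ≤ ‖s‖ := by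
    have h3 : ‖g⁻¹‖ - ‖z‖ ≤ ‖s‖ := norm_sub_norm_le _ _
    rw [hab]
    linarith
  have hspos : 0 < ‖s‖ := lt_of_lt_of_le (by positivity) hs_lb
  have hs0 : s ≠ 0 := norm_pos_iff.mp hspos
  have hsin : ‖s⁻¹‖ ≤ M1 * a / δ := by
    rw [norm_inv, show M1 * a / δ = (δ / (M1 * a))⁻¹ by field_simp]
    exact inv_anti₀ (by positivity) hs_lb
  -- the explicit inverse
  set Γ : Matrix Unit Unit ℂ := Matrix.of fun _ _ => g⁻¹ with hΓ_def
  set S1 : Matrix Unit Unit ℂ := Matrix.of fun _ _ => s with hS1_def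
  set Si : Matrix Unit Unit ℂ := Matrix.of fun _ _ => s⁻¹ with hSi_def
  have hΓ : Γ = S1 + r * Di * c := by
    ext i j
    cases i; cases j
    simp [hΓ_def, hS1_def, hs_def, hz_def]
  have hSSi : S1 * Si = 1 := by
    ext i j
    cases i; cases j
    simp [hS1_def, hSi_def, Matrix.mul_apply, mul_inv_cancel₀ hs0, Matrix.one_apply]
  have hSiS : Si * S1 = 1 := by
    ext i j
    cases i; cases j
    simp [hS1_def, hSi_def, Matrix.mul_apply, inv_mul_cancel₀ hs0, Matrix.one_apply]
  set K : Matrix (Unit ⊕ Fin (m + 1)) (Unit ⊕ Fin (m + 1)) ℂ :=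
    Matrix.fromBlocks Si (-(Si * (r * Di))) (-(Di * c * Si))
      (Di + Di * c * (Si * (r * Di))) with hK_def
  have b11 : Γ * Si + r * -(Di * c * Si) = 1 := by
    simp only [hΓ, Matrix.add_mul, Matrix.mul_add, Matrix.mul_neg, Matrix.neg_mul,
      ← Matrix.mul_assoc, hSSi, hSiS, hDDi, Matrix.one_mul, Matrix.mul_one]
    abel
  have b12 : Γ * -(Si * (r * Di)) + r * (Di + Di * c * (Si * (r * Di))) = 0 := by
    simp only [hΓ, Matrix.add_mul, Matrix.mul_add, Matrix.mul_neg, Matrix.neg_mul,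
      ← Matrix.mul_assoc, hSSi, hSiS, hDDi, Matrix.one_mul, Matrix.mul_one]
    abel
  have b21 : c * Si + H22 * -(Di * c * Si) = 0 := by
    simp only [hΓ, Matrix.add_mul, Matrix.mul_add, Matrix.mul_neg, Matrix.neg_mul,
      ← Matrix.mul_assoc, hSSi, hSiS, hDDi, Matrix.one_mul, Matrix.mul_one]
    abel
  have b22 : c * -(Si * (r * Di)) + H22 * (Di + Di * c * (Si * (r * Di))) = 1 := by
    simp only [hΓ, Matrix.add_mul, Matrix.mul_add, Matrix.mul_neg, Matrix.neg_mul,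
      ← Matrix.mul_assoc, hSSi, hSiS, hDDi, Matrix.one_mul, Matrix.mul_one]
    abel
  have hHK : Matrix.fromBlocks Γ r c H22 * K = 1 := by
    rw [hK_def, Matrix.fromBlocks_multiply, b11, b12, b21, b22, Matrix.fromBlocks_one]
  have b11' : Si * Γ + -(Si * (r * Di)) * c = 1 := by
    simp only [hΓ, Matrix.add_mul, Matrix.mul_add, Matrix.mul_neg, Matrix.neg_mul,
      ← Matrix.mul_assoc, hSSi, hSiS, hDDi, Matrix.one_mul, Matrix.mul_one]
    abel
  have b12' : Si * r + -(Si * (r * Di)) * H22 = 0 := by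
    simp only [hΓ, Matrix.add_mul, Matrix.mul_add, Matrix.mul_neg, Matrix.neg_mul,
      Matrix.mul_assoc, hSiS, hDiD, Matrix.one_mul, Matrix.mul_one]
    abel
  have b21' : -(Di * c * Si) * Γ + (Di + Di * c * (Si * (r * Di))) * c = 0 := by
    simp only [hΓ, Matrix.add_mul, Matrix.mul_add, Matrix.mul_neg, Matrix.neg_mul,
      Matrix.mul_assoc, hSiS, hDiD, Matrix.one_mul, Matrix.mul_one]
    abel
  have b22' : -(Di * c * Si) * r + (Di + Di * c * (Si * (r * Di))) * H22 = 1 := by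
    simp only [hΓ, Matrix.add_mul, Matrix.mul_add, Matrix.mul_neg, Matrix.neg_mul,
      Matrix.mul_assoc, hSiS, hDiD, Matrix.one_mul, Matrix.mul_one]
    abel
  have hKH : K * Matrix.fromBlocks Γ r c H22 = 1 := by
    rw [hK_def, Matrix.fromBlocks_multiply, b11', b12', b21', b22', Matrix.fromBlocks_one]
  have hinvertible : Invertible (Matrix.fromBlocks Γ r c H22) := ⟨K, hKH, hHK⟩
  have hunit : IsUnit (Matrix.fromBlocks Γ r c H22) := isUnit_of_invertible _
  refine ⟨hunit, ?_⟩
  have hHinv : (Matrix.fromBlocks Γ r c H22)⁻¹ = K := Matrix.inv_eq_right_inv hHK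
  have hT : K - g • Matrix.fromBlocks 1 0 0 0 = Matrix.fromBlocks
      (Si - g • 1) (-(Si * (r * Di))) (-(Di * c * Si)) (Di + Di * c * (Si * (r * Di))) := by
    rw [hK_def]
    ext i j
    rcases i with i | i <;> rcases j with j | j <;>
      simp [Matrix.sub_apply, Matrix.smul_apply, Matrix.one_apply]
  rw [hHinv, hT]
  have h1a : (0:ℝ) < 1 / a := div_pos one_pos ha
  have hMA : (0:ℝ) < M1 * a / δ := div_pos (mul_pos hM1 ha) hδ
  have hSin : ‖Si‖ = ‖s⁻¹‖ := by rw [norm_unit_matrix]; simp [hSi_def]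
  have hSin' : ‖Si‖ ≤ M1 * a / δ := hSin ▸ hsin
  have keyc : s⁻¹ - g = s⁻¹ * (z * g) := by
    have h5 : s * g = 1 - z * g := by
      rw [hs_def, sub_mul, inv_mul_cancel₀ hg]
    have h6 : s⁻¹ * (s * g) = g := by rw [← mul_assoc, inv_mul_cancel₀ hs0, one_mul]
    calc s⁻¹ - g = s⁻¹ * 1 - s⁻¹ * (s * g) := by rw [h6, mul_one]
      _ = s⁻¹ * (1 - s * g) := by ring
      _ = s⁻¹ * (z * g) := by rw [h5]; ring_nf
  have e1 : ‖Si - g • (1 : Matrix Unit Unit ℂ)‖ = ‖s⁻¹ - g‖ := by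
    rw [norm_unit_matrix]
    simp [hSi_def, Matrix.sub_apply, Matrix.smul_apply, Matrix.one_apply]
  have n1 : ‖Si - g • (1 : Matrix Unit Unit ℂ)‖ ≤ M1 * a / δ * (M2 * ((1 / a) * M2) * M1) := by
    rw [e1, keyc, norm_mul, norm_mul]
    refine mul_le_mul hsin (mul_le_mul hzn hgM (norm_nonneg _)
      (by positivity)) (by positivity) hMA.le
  have n2 : ‖-(Si * (r * Di))‖ ≤ M1 * a / δ * (M2 * (1 / a)) := by
    rw [norm_neg]
    calc ‖Si * (r * Di)‖ ≤ ‖Si‖ * ‖r * Di‖ := Matrix.l2_opNorm_mul _ _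
      _ ≤ ‖Si‖ * (‖r‖ * ‖Di‖) :=
          mul_le_mul_of_nonneg_left (Matrix.l2_opNorm_mul _ _) (norm_nonneg _)
      _ ≤ M1 * a / δ * (M2 * (1 / a)) :=
          mul_le_mul hSin' (mul_le_mul hrn hDin (norm_nonneg _) hM2.le)
            (mul_nonneg (norm_nonneg _) (norm_nonneg _)) hMA.le
  have n3 : ‖-(Di * c * Si)‖ ≤ (1 / a) * M2 * (M1 * a / δ) := by
    rw [norm_neg]
    calc ‖Di * c * Si‖ ≤ ‖Di * c‖ * ‖Si‖ := Matrix.l2_opNorm_mul _ _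
      _ ≤ ‖Di‖ * ‖c‖ * ‖Si‖ :=
          mul_le_mul_of_nonneg_right (Matrix.l2_opNorm_mul _ _) (norm_nonneg _)
      _ ≤ (1 / a) * M2 * (M1 * a / δ) :=
          mul_le_mul (mul_le_mul hDin hcn (norm_nonneg _) h1a.le) hSin'
            (norm_nonneg _) (by positivity)
  have n4 : ‖Di + Di * c * (Si * (r * Di))‖ ≤
      1 / a + (1 / a) * M2 * (M1 * a / δ * (M2 * (1 / a))) := by
    refine le_trans (norm_add_le _ _) (add_le_add hDin ?_)
    calc ‖Di * c * (Si * (r * Di))‖ ≤ ‖Di * c‖ * ‖Si * (r * Di)‖ := Matrix.l2_opNorm_mul _ _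
      _ ≤ ‖Di‖ * ‖c‖ * (‖Si‖ * (‖r‖ * ‖Di‖)) := by
          refine mul_le_mul (Matrix.l2_opNorm_mul _ _) ?_ (norm_nonneg _)
            (mul_nonneg (norm_nonneg _) (norm_nonneg _))
          exact le_trans (Matrix.l2_opNorm_mul _ _)
            (mul_le_mul_of_nonneg_left (Matrix.l2_opNorm_mul _ _) (norm_nonneg _))
      _ ≤ (1 / a) * M2 * (M1 * a / δ * (M2 * (1 / a))) := by
          refine mul_le_mul (mul_le_mul hDin hcn (norm_nonneg _) h1a.le)
            (mul_le_mul hSin' (mul_le_mul hrn hDin (norm_nonneg _) hM2.le)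
              (mul_nonneg (norm_nonneg _) (norm_nonneg _)) hMA.le)
            (mul_nonneg (norm_nonneg _) (mul_nonneg (norm_nonneg _) (norm_nonneg _)))
            (by positivity)
  have final_eq : M1 * a / δ * (M2 * ((1 / a) * M2) * M1) + M1 * a / δ * (M2 * (1 / a)) +
      (1 / a) * M2 * (M1 * a / δ) +
      (1 / a + (1 / a) * M2 * (M1 * a / δ * (M2 * (1 / a)))) =
      (M1 ^ 2 * M2 ^ 2 + 2 * M1 * M2 + M1 * M2 ^ 2 / a) / δ + 1 / a := by
    field_simp
    ring
  calc ‖Matrix.fromBlocks (Si - g • 1) (-(Si * (r * Di))) (-(Di * c * Si))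
        (Di + Di * c * (Si * (r * Di)))‖
      ≤ ‖Si - g • (1 : Matrix Unit Unit ℂ)‖ + ‖-(Si * (r * Di))‖ + ‖-(Di * c * Si)‖ +
        ‖Di + Di * c * (Si * (r * Di))‖ := fromBlocks_norm_le _ _ _ _
    _ ≤ (M1 ^ 2 * M2 ^ 2 + 2 * M1 * M2 + M1 * M2 ^ 2 / a) / δ + 1 / a := by
        rw [← final_eq]; exact add_le_add (add_le_add (add_le_add n1 n2) n3) n4
end
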